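/- arXiv:0907.1122 — 3 statements merged into one kernel-verified Lean document; each statement's English description precedes it below -/
import Mathlib

section
/- Let n ≥ 2, 1 ≤ k ≤ n, and let S₂ be a primitive non-powerful signed digraph whose underlying digraph is D₂. If the two cycles of length n-1 of S₂ have the same sign, then L(S₂,k) = (2n-k)(n-1). -/
/-- There is a walk of length `l` from `u` to `v` in the digraph with arc relation `A`. -/
def HasWalk {n : ℕ} (A : Fin n → Fin n → Prop) (u v : Fin n) (l : ℕ) : Prop :=
  ∃ f : ℕ → Fin n, f 0 = u ∧ f l = v ∧ ∀ i < l, A (f i) (f (i + 1))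

/-- A digraph is primitive if for some `p > 0` every ordered pair of vertices is
joined by a walk of length exactly `p`. -/
def Primitive {n : ℕ} (A : Fin n → Fin n → Prop) : Prop :=
  ∃ p, 0 < p ∧ ∀ u v : Fin n, HasWalk A u v p

/-- `f` is the vertex sequence of a walk of length `l` from `u` to `v` in `A`. -/
def IsWalkSeq {n : ℕ} (A : Fin n → Fin n → Prop) (f : ℕ → Fin n) (u v : Fin n) (l : ℕ) : Prop :=
  f 0 = u ∧ f l = v ∧ ∀ i < l, A (f i) (f (i + 1))

/-- The sign of (the length-`l` initial part of) the walk with vertex sequence `f`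
in the signed digraph `S`. -/
def walkSign {n : ℕ} (S : Fin n → Fin n → ℤ) (f : ℕ → Fin n) (l : ℕ) : ℤ :=
  ∏ i ∈ Finset.range l, S (f i) (f (i + 1))

/-- The underlying digraph of a signed digraph `S`. -/
def Underlying {n : ℕ} (S : Fin n → Fin n → ℤ) : Fin n → Fin n → Prop :=
  fun u v => S u v ≠ 0

/-- All entries of `S` are in `{0, 1, -1}`: `S` is a sign pattern / signed digraph. -/
def SignPattern {n : ℕ} (S : Fin n → Fin n → ℤ) : Prop :=
  ∀ u v, S u v = 0 ∨ S u v = 1 ∨ S u v = -1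

/-- There is a pair of SSSD walks of length `l` from `u` to `v`: two walks with the
same endpoints and length but different signs. -/
def HasSSSD {n : ℕ} (S : Fin n → Fin n → ℤ) (u v : Fin n) (l : ℕ) : Prop :=
  ∃ f g : ℕ → Fin n, IsWalkSeq (Underlying S) f u v l ∧ IsWalkSeq (Underlying S) g u v l ∧
    walkSign S f l ≠ walkSign S g l

/-- A signed digraph is non-powerful iff it contains a pair of SSSD walks. -/
def NonPowerful {n : ℕ} (S : Fin n → Fin n → ℤ) : Prop :=
  ∃ u v l, HasSSSD S u v l

/-- `exp_D(X)`: the least `p` such that every vertex is reachable from some vertex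
of `X` by a walk of length exactly `p`. -/
noncomputable def setExp {n : ℕ} (A : Fin n → Fin n → Prop) (X : Finset (Fin n)) : ℕ :=
  sInf {p | ∀ v, ∃ x ∈ X, HasWalk A x v p}

/-- `F(D,k)`: the `k`th upper multiexponent. -/
noncomputable def upperMultiexp {n : ℕ} (A : Fin n → Fin n → Prop) (k : ℕ) : ℕ :=
  sSup {e | ∃ X : Finset (Fin n), X.card = k ∧ setExp A X = e}

/-- `l_S(X)`: the least `p` such that every vertex admits a pair of SSSD walks of
length `p` from some vertex of `X`. -/
noncomputable def setBase {n : ℕ} (S : Fin n → Fin n → ℤ) (X : Finset (Fin n)) : ℕ :=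
  sInf {p | ∀ v, ∃ x ∈ X, HasSSSD S x v p}

/-- `L(S,k)`: the `k`th upper base. -/
noncomputable def upperBase {n : ℕ} (S : Fin n → Fin n → ℤ) (k : ℕ) : ℕ :=
  sSup {e | ∃ X : Finset (Fin n), X.card = k ∧ setBase S X = e}

/-- Distance from `u` to `v` in the digraph `A`. -/
noncomputable def ddist {n : ℕ} (A : Fin n → Fin n → Prop) (u v : Fin n) : ℕ :=
  sInf {l | HasWalk A u v l}

/-- Diameter of the digraph `A`. -/
noncomputable def diam {n : ℕ} (A : Fin n → Fin n → Prop) : ℕ :=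
  sSup {d | ∃ u v : Fin n, ddist A u v = d}

/-- `f` is the vertex sequence of a cycle of length `p` in `A`: a closed walk of
length `p` whose first `p` vertices are pairwise distinct. -/
def IsCycleSeq {n : ℕ} (A : Fin n → Fin n → Prop) (f : ℕ → Fin n) (p : ℕ) : Prop :=
  0 < p ∧ f p = f 0 ∧ (∀ i < p, A (f i) (f (i + 1))) ∧
    ∀ i < p, ∀ j < p, f i = f j → i = j

/-- The digraph `D₁` on `{1,…,n}` (vertex `i` is index `i-1`): the Hamiltonian cycle
`1→2→⋯→n→1` together with the extra arc `(n-1)→1`. -/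
def D1 (n : ℕ) : Fin n → Fin n → Prop := fun u v =>
  (v.val = u.val + 1) ∨ (u.val = n - 1 ∧ v.val = 0) ∨ (u.val = n - 2 ∧ v.val = 0)

/-- The digraph `D₂`: `D₁` together with the extra arc `(n)→2`. -/
def D2 (n : ℕ) : Fin n → Fin n → Prop := fun u v =>
  D1 n u v ∨ (u.val = n - 1 ∧ v.val = 1)

/-- Isomorphism of digraphs on the same vertex set `Fin n`. -/
def DigraphIso {n : ℕ} (A B : Fin n → Fin n → Prop) : Prop :=
  ∃ e : Fin n ≃ Fin n, ∀ u v, A u v ↔ B (e u) (e v)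

namespace D2Aux

variable {n : ℕ}

/-- vertex with value `m % n`. -/
def vtx (hn : 0 < n) (m : ℕ) : Fin n := ⟨m % n, Nat.mod_lt m hn⟩

@[simp] lemma vtx_val (hn : 0 < n) (m : ℕ) : (vtx hn m).val = m % n := rfl

lemma vtx_val_of_lt (hn : 0 < n) {m : ℕ} (h : m < n) : (vtx hn m).val = m := by
  simp [Nat.mod_eq_of_lt h]

lemma vtx_self (hn : 0 < n) (v : Fin n) : vtx hn v.val = v := by
  apply Fin.ext; simp [Nat.mod_eq_of_lt v.isLt]

variable (S : Fin n → Fin n → ℤ)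

/-- sign of the line arc `i → i+1`. -/
def lsg (hn : 0 < n) (i : ℕ) : ℤ := S (vtx hn i) (vtx hn (i+1))

/-- multiplicative potential. -/
def tau (hn : 0 < n) (v : Fin n) : ℤ := ∏ i ∈ Finset.range v.val, lsg S hn i

/-- sign of the Hamiltonian cycle. -/
def snn (hn : 0 < n) : ℤ := tau S hn (vtx hn (n-1)) * S (vtx hn (n-1)) (vtx hn 0)

/-- common sign of the two `n-1`-cycles. -/
def spp (hn : 0 < n) : ℤ := tau S hn (vtx hn (n-2)) * S (vtx hn (n-2)) (vtx hn 0)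

section Units

variable (hn2 : 2 ≤ n) (hsp : SignPattern S) (hund : ∀ u v, Underlying S u v ↔ D2 n u v)

lemma hn0 (hn2 : 2 ≤ n) : 0 < n := by omega

include hsp hund in
lemma arc_sq {u v : Fin n} (h : D2 n u v) : S u v * S u v = 1 := by
  have h0 : S u v ≠ 0 := (hund u v).mpr h
  rcases hsp u v with h' | h' | h' <;> simp [h'] at h0 ⊢

include hn2 in
lemma line_arc {i : ℕ} (h : i + 1 ≤ n - 1) : D2 n (vtx (hn0 hn2) i) (vtx (hn0 hn2) (i+1)) := by
  left; left
  show (vtx (hn0 hn2) (i+1)).val = (vtx (hn0 hn2) i).val + 1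
  rw [vtx_val_of_lt _ (show i < n by omega), vtx_val_of_lt _ (show i + 1 < n by omega)]

include hn2 in
lemma e1_arc : D2 n (vtx (hn0 hn2) (n-1)) (vtx (hn0 hn2) 0) := by
  left; right; left
  constructor
  · exact vtx_val_of_lt _ (by omega)
  · exact vtx_val_of_lt _ (by omega)

include hn2 in
lemma e2_arc : D2 n (vtx (hn0 hn2) (n-2)) (vtx (hn0 hn2) 0) := by
  left; right; right
  exact ⟨vtx_val_of_lt _ (by omega), vtx_val_of_lt _ (by omega)⟩

include hn2 in
lemma e3_arc : D2 n (vtx (hn0 hn2) (n-1)) (vtx (hn0 hn2) 1) := by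
  right
  exact ⟨vtx_val_of_lt _ (by omega), vtx_val_of_lt _ (by omega)⟩

include hn2 hsp hund in
lemma lsg_sq {i : ℕ} (h : i + 1 ≤ n - 1) : lsg S (hn0 hn2) i * lsg S (hn0 hn2) i = 1 :=
  arc_sq S hsp hund (line_arc hn2 h)

include hn2 hsp hund in
lemma tau_sq (v : Fin n) : tau S (hn0 hn2) v * tau S (hn0 hn2) v = 1 := by
  rw [tau, ← Finset.prod_mul_distrib]
  apply Finset.prod_eq_one
  intro i hi
  simp only [Finset.mem_range] at hi
  exact lsg_sq S hn2 hsp hund (by have := v.isLt; omega)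

include hn2 hsp hund in
lemma snn_sq : snn S (hn0 hn2) * snn S (hn0 hn2) = 1 := by
  rw [snn, show ∀ a b : ℤ, (a*b)*(a*b) = (a*a)*(b*b) by intros; ring,
    tau_sq S hn2 hsp hund, arc_sq S hsp hund (e1_arc hn2), one_mul]

include hn2 hsp hund in
lemma spp_sq : spp S (hn0 hn2) * spp S (hn0 hn2) = 1 := by
  rw [spp, show ∀ a b : ℤ, (a*b)*(a*b) = (a*a)*(b*b) by intros; ring,
    tau_sq S hn2 hsp hund, arc_sq S hsp hund (e2_arc hn2), one_mul]

end Units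

end D2Aux
namespace D2Aux

variable {n : ℕ} (S : Fin n → Fin n → ℤ)

/-- the cycle `0 → 1 → ⋯ → (n-2) → 0`. -/
def c1seq (hn : 0 < n) : ℕ → Fin n := fun i => vtx hn (i % (n-1))

/-- the cycle `(n-1) → 1 → 2 → ⋯ → (n-1)`, also used as loop/ending at `n-1`. -/
def e3seq (hn : 0 < n) : ℕ → Fin n := fun i => if i = 0 then vtx hn (n-1) else vtx hn i

/-- the walk `(n-1) → 0 → 1 → ⋯`. -/
def e1seq (hn : 0 < n) : ℕ → Fin n := fun i => if i = 0 then vtx hn (n-1) else vtx hn (i-1)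

/-- the straight walk starting at `x`. -/
def lineseq (hn : 0 < n) (x : ℕ) : ℕ → Fin n := fun i => vtx hn (x + i)

/-- walk from `x` along the line to `n-2`, then the arc `(n-2) → 0`. -/
def e2seq (hn : 0 < n) (x : ℕ) : ℕ → Fin n :=
  fun i => if x + i ≤ n - 2 then vtx hn (x + i) else vtx hn 0

variable (hn2 : 2 ≤ n)

include hn2 in
lemma c1_cycle : IsCycleSeq (D2 n) (c1seq (hn0 hn2) : ℕ → Fin n) (n-1) := by
  have hn := hn0 hn2
  refine ⟨by omega, ?_, ?_, ?_⟩
  · simp [c1seq, Nat.mod_self]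
  · intro i hi
    have hi' : i % (n-1) = i := Nat.mod_eq_of_lt hi
    by_cases h : i + 1 < n - 1
    · have : (i+1) % (n-1) = i + 1 := Nat.mod_eq_of_lt h
      show D2 n (vtx hn (i % (n-1))) (vtx hn ((i+1) % (n-1)))
      rw [hi', this]
      exact line_arc hn2 (by omega)
    · have hieq : i = n - 2 := by omega
      have : (i+1) % (n-1) = 0 := by
        have : i + 1 = n - 1 := by omega
        rw [this, Nat.mod_self]
      show D2 n (vtx hn (i % (n-1))) (vtx hn ((i+1) % (n-1)))
      rw [hi', this, hieq]
      exact e2_arc hn2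
  · intro i hi j hj hij
    have : i % (n-1) = i := Nat.mod_eq_of_lt hi
    have hj' : j % (n-1) = j := Nat.mod_eq_of_lt hj
    have := congrArg Fin.val hij
    simp only [c1seq, vtx_val] at this
    rw [Nat.mod_eq_of_lt (show i % (n-1) < n by omega),
      Nat.mod_eq_of_lt (show j % (n-1) < n by omega)] at this
    omega

include hn2 in
lemma e3_cycle : IsCycleSeq (D2 n) (e3seq (hn0 hn2) : ℕ → Fin n) (n-1) := by
  have hn := hn0 hn2
  refine ⟨by omega, ?_, ?_, ?_⟩
  · by_cases h : n - 1 = 0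
    · omega
    · simp [e3seq, h]
  · intro i hi
    rcases Nat.eq_zero_or_pos i with rfl | hipos
    · show D2 n (e3seq hn 0) (e3seq hn 1)
      have h1 : e3seq hn 1 = vtx hn 1 := by
        simp only [e3seq, if_neg (by omega : (1:ℕ) ≠ 0)]
      by_cases hn2' : n = 2
      · -- then 1 = n-1, both branches same vertex anyway
        have : e3seq hn 1 = vtx hn 1 := h1
        rw [show e3seq hn 0 = vtx hn (n-1) by simp [e3seq], h1]
        exact e3_arc hn2
      · rw [show e3seq hn 0 = vtx hn (n-1) by simp [e3seq], h1]
        exact e3_arc hn2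
    · have h1 : e3seq hn i = vtx hn i := by simp [e3seq, Nat.pos_iff_ne_zero.mp hipos]
      have h2 : e3seq hn (i+1) = vtx hn (i+1) := by simp [e3seq]
      rw [h1, h2]
      exact line_arc hn2 (by omega)
  · intro i hi j hj hij
    have hval := congrArg Fin.val hij
    simp only [e3seq] at hval
    rcases Nat.eq_zero_or_pos i with rfl | hip <;> rcases Nat.eq_zero_or_pos j with rfl | hjp
    · rfl
    · exfalso
      simp only [if_pos rfl, if_neg (by omega : j ≠ 0), vtx_val, if_true] at hval
      rw [Nat.mod_eq_of_lt (by omega : j < n)] at hval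
      rw [Nat.mod_eq_of_lt (by omega : n - 1 < n)] at hval
      omega
    · exfalso
      simp only [if_pos rfl, if_neg (by omega : i ≠ 0), vtx_val, if_true] at hval
      rw [Nat.mod_eq_of_lt (by omega : i < n)] at hval
      rw [Nat.mod_eq_of_lt (by omega : n - 1 < n)] at hval
      omega
    · simp only [if_neg (by omega : i ≠ 0), if_neg (by omega : j ≠ 0), vtx_val] at hval
      rw [Nat.mod_eq_of_lt (by omega : i < n), Nat.mod_eq_of_lt (by omega : j < n)] at hval
      exact hval

include hn2 in
lemma tau_vtx (m : ℕ) (hm : m < n) :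
    tau S (hn0 hn2) (vtx (hn0 hn2) m) = ∏ i ∈ Finset.range m, lsg S (hn0 hn2) i := by
  rw [tau, vtx_val, Nat.mod_eq_of_lt hm]

include hn2 in
lemma c1_sign : walkSign S (c1seq (hn0 hn2)) (n-1) = spp S (hn0 hn2) := by
  have hn := hn0 hn2
  rw [walkSign, show n - 1 = (n-2) + 1 by omega, Finset.prod_range_succ]
  have h1 : ∀ i ∈ Finset.range (n-2),
      S (c1seq hn i) (c1seq hn (i+1)) = lsg S hn i := by
    intro i hi
    simp only [Finset.mem_range] at hi
    have : i % (n-1) = i := Nat.mod_eq_of_lt (by omega)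
    have h2 : (i+1) % (n-1) = i+1 := Nat.mod_eq_of_lt (by omega)
    simp only [c1seq, this, h2, lsg]
  rw [Finset.prod_congr rfl h1]
  have h2 : c1seq hn (n-2) = vtx hn (n-2) := by
    simp only [c1seq, Nat.mod_eq_of_lt (show n-2 < n-1 by omega)]
  have h3 : c1seq hn (n-2+1) = vtx hn 0 := by
    simp only [c1seq, show n-2+1 = n-1 by omega, Nat.mod_self]
  rw [h2, h3, spp, tau_vtx S hn2 _ (by omega)]

end D2Aux
namespace D2Aux

variable {n : ℕ} (S : Fin n → Fin n → ℤ)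
variable (hn2 : 2 ≤ n) (hsp : SignPattern S) (hund : ∀ u v, Underlying S u v ↔ D2 n u v)

include hn2 in
lemma tau_v0 : tau S (hn0 hn2) (vtx (hn0 hn2) 0) = 1 := by
  rw [tau_vtx S hn2 0 (by omega), Finset.range_zero, Finset.prod_empty]

include hn2 in
lemma tau_v1 : tau S (hn0 hn2) (vtx (hn0 hn2) 1) = lsg S (hn0 hn2) 0 := by
  rw [tau_vtx S hn2 1 (by omega), Finset.prod_range_one]

include hn2 hsp hund in
lemma sn_arc : S (vtx (hn0 hn2) (n-1)) (vtx (hn0 hn2) 0)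
    = snn S (hn0 hn2) * tau S (hn0 hn2) (vtx (hn0 hn2) (n-1)) := by
  rw [snn, mul_comm (tau S (hn0 hn2) (vtx (hn0 hn2) (n-1))), mul_assoc,
    tau_sq S hn2 hsp hund, mul_one]

include hn2 hsp hund in
lemma sp_arc : S (vtx (hn0 hn2) (n-2)) (vtx (hn0 hn2) 0)
    = spp S (hn0 hn2) * tau S (hn0 hn2) (vtx (hn0 hn2) (n-2)) := by
  rw [spp, mul_comm (tau S (hn0 hn2) (vtx (hn0 hn2) (n-2))), mul_assoc,
    tau_sq S hn2 hsp hund, mul_one]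

section E3

variable (hsame : ∀ f g : ℕ → Fin n, IsCycleSeq (D2 n) f (n - 1) →
      IsCycleSeq (D2 n) g (n - 1) → walkSign S f (n - 1) = walkSign S g (n - 1))

include hn2 hsame in
lemma e3_sign : walkSign S (e3seq (hn0 hn2)) (n-1) = spp S (hn0 hn2) := by
  rw [← c1_sign S hn2]
  exact hsame _ _ (e3_cycle hn2) (c1_cycle hn2)

include hn2 hsp hund hsame in
lemma e3_arc_id : S (vtx (hn0 hn2) (n-1)) (vtx (hn0 hn2) 1)
    = spp S (hn0 hn2) * tau S (hn0 hn2) (vtx (hn0 hn2) (n-1)) * tau S (hn0 hn2) (vtx (hn0 hn2) 1) := by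
  have hn := hn0 hn2
  have hes : walkSign S (e3seq hn) (n-1) = spp S hn := e3_sign S hn2 hsame
  -- expand the walk sign, peeling the first arc
  rw [walkSign, show n - 1 = (n-2) + 1 by omega, Finset.prod_range_succ'] at hes
  have hterm : ∀ i ∈ Finset.range (n-2),
      S (e3seq hn (i+1)) (e3seq hn (i+1+1)) = lsg S hn (i+1) := by
    intro i hi
    simp only [Finset.mem_range] at hi
    have h1 : e3seq hn (i+1) = vtx hn (i+1) := by simp [e3seq]
    have h2 : e3seq hn (i+2) = vtx hn (i+2) := by simp [e3seq]
    rw [h1, h2]; rfl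
  rw [Finset.prod_congr rfl hterm] at hes
  have h0 : e3seq hn 0 = vtx hn (n-1) := by simp [e3seq]
  have h1 : e3seq hn 1 = vtx hn 1 := by simp [e3seq]
  rw [h0, h1] at hes
  set Q : ℤ := ∏ i ∈ Finset.range (n-2), lsg S hn (i+1) with hQ
  have hQsq : Q * Q = 1 := by
    rw [hQ, ← Finset.prod_mul_distrib]
    apply Finset.prod_eq_one
    intro i hi
    simp only [Finset.mem_range] at hi
    exact lsg_sq S hn2 hsp hund (by omega)
  -- tau(last) = Q * lsg 0,  tau(v1) = lsg 0
  have htl : tau S hn (vtx hn (n-1)) = Q * lsg S hn 0 := by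
    rw [tau_vtx S hn2 _ (by omega), show n - 1 = (n-2) + 1 by omega, Finset.prod_range_succ']
  have ht1 : tau S hn (vtx hn 1) = lsg S hn 0 := tau_v1 S hn2
  have hl0 : lsg S hn 0 * lsg S hn 0 = 1 := lsg_sq S hn2 hsp hund (by omega)
  -- from hes : Q * S(last, v1) = spp
  calc S (vtx hn (n-1)) (vtx hn 1)
      = Q * Q * S (vtx hn (n-1)) (vtx hn 1) := by rw [hQsq, one_mul]
    _ = Q * (Q * S (vtx hn (n-1)) (vtx hn 1)) := by ring
    _ = Q * spp S hn := by rw [hes]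
    _ = spp S hn * tau S hn (vtx hn (n-1)) * tau S hn (vtx hn 1) := by
        rw [htl, ht1]
        linear_combination (-(Q * spp S hn)) * hl0

end E3

end D2Aux
namespace D2Aux

variable {n : ℕ} (S : Fin n → Fin n → ℤ)
variable (hn2 : 2 ≤ n) (hsp : SignPattern S) (hund : ∀ u v, Underlying S u v ↔ D2 n u v)
variable (hsame : ∀ f g : ℕ → Fin n, IsCycleSeq (D2 n) f (n - 1) →
      IsCycleSeq (D2 n) g (n - 1) → walkSign S f (n - 1) = walkSign S g (n - 1))

include hn2 hsp hund hsame in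
lemma walk_struct (l : ℕ) (f : ℕ → Fin n) (hw : ∀ i < l, Underlying S (f i) (f (i+1))) :
    ∃ X Y : ℕ, l + (f 0).val = n * X + (n-1) * Y + (f l).val ∧
      walkSign S f l = tau S (hn0 hn2) (f 0) * tau S (hn0 hn2) (f l)
        * snn S (hn0 hn2) ^ X * spp S (hn0 hn2) ^ Y := by
  have hn := hn0 hn2
  induction l with
  | zero =>
    refine ⟨0, 0, by simp, ?_⟩
    simp only [walkSign, Finset.range_zero, Finset.prod_empty, pow_zero, mul_one]
    exact (tau_sq S hn2 hsp hund (f 0)).symm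
  | succ l ih =>
    obtain ⟨X, Y, hlen, hsgn⟩ := ih (fun i hi => hw i (by omega))
    have harc : D2 n (f l) (f (l+1)) := (hund _ _).mp (hw l (by omega))
    have hstep : walkSign S f (l+1) = walkSign S f l * S (f l) (f (l+1)) :=
      Finset.prod_range_succ _ _
    have harc' : ((f (l+1)).val = (f l).val + 1 ∨ ((f l).val = n - 1 ∧ (f (l+1)).val = 0)
        ∨ ((f l).val = n - 2 ∧ (f (l+1)).val = 0)) ∨ ((f l).val = n - 1 ∧ (f (l+1)).val = 1) := harc
    clear harc
    rcases harc' with (hline | ⟨he1u, he1v⟩ | ⟨he2u, he2v⟩) | ⟨he3u, he3v⟩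
    · -- line arc
      refine ⟨X, Y, by omega, ?_⟩
      have hvlt : (f l).val + 1 < n := by rw [← hline]; exact (f (l+1)).isLt
      have h1 : f l = vtx hn ((f l).val) := (vtx_self hn _).symm
      have h2 : f (l+1) = vtx hn ((f l).val + 1) := by
        apply Fin.ext; rw [hline, vtx_val_of_lt _ hvlt]
      have hS : S (f l) (f (l+1)) = lsg S hn ((f l).val) := by
        rw [lsg, ← h1, ← h2]
      have htau : tau S hn (f (l+1)) = tau S hn (f l) * lsg S hn ((f l).val) := by
        rw [h2, tau_vtx S hn2 _ hvlt, Finset.prod_range_succ, tau]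
      rw [hstep, hsgn, hS, htau]; ring
    · -- e1 arc
      refine ⟨X+1, Y, ?_, ?_⟩
      · rw [Nat.mul_succ]
        have h3 : n - 1 + 1 = n := by omega
        rw [he1u] at hlen; rw [he1v]; omega
      · have h1 : f l = vtx hn (n-1) := by apply Fin.ext; rw [he1u, vtx_val_of_lt _ (by omega)]
        have h2 : f (l+1) = vtx hn 0 := by apply Fin.ext; rw [he1v, vtx_val_of_lt _ (by omega)]
        have hsq := tau_sq S hn2 hsp hund (vtx hn (n-1))
        rw [hstep, hsgn, h1, h2, sn_arc S hn2 hsp hund, tau_v0 S hn2]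
        rw [pow_succ]
        linear_combination (tau S hn (f 0) * snn S hn ^ X * spp S hn ^ Y * snn S hn) * hsq
    · -- e2 arc
      refine ⟨X, Y+1, ?_, ?_⟩
      · rw [Nat.mul_succ]
        rw [he2u] at hlen; rw [he2v]; omega
      · have h1 : f l = vtx hn (n-2) := by apply Fin.ext; rw [he2u, vtx_val_of_lt _ (by omega)]
        have h2 : f (l+1) = vtx hn 0 := by apply Fin.ext; rw [he2v, vtx_val_of_lt _ (by omega)]
        have hsq := tau_sq S hn2 hsp hund (vtx hn (n-2))
        rw [hstep, hsgn, h1, h2, sp_arc S hn2 hsp hund, tau_v0 S hn2]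
        rw [pow_succ]
        linear_combination (tau S hn (f 0) * snn S hn ^ X * spp S hn ^ Y * spp S hn) * hsq
    · -- e3 arc
      refine ⟨X, Y+1, ?_, ?_⟩
      · rw [Nat.mul_succ]
        rw [he3u] at hlen; rw [he3v]; omega
      · have h1 : f l = vtx hn (n-1) := by apply Fin.ext; rw [he3u, vtx_val_of_lt _ (by omega)]
        have h2 : f (l+1) = vtx hn 1 := by apply Fin.ext; rw [he3v, vtx_val_of_lt _ (by omega)]
        have hsq := tau_sq S hn2 hsp hund (vtx hn (n-1))
        rw [hstep, hsgn, h1, h2, e3_arc_id S hn2 hsp hund hsame]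
        rw [pow_succ]
        linear_combination (tau S hn (f 0) * snn S hn ^ X * spp S hn ^ Y * spp S hn
          * tau S hn (vtx hn 1)) * hsq

end D2Aux
namespace D2Aux

variable {n : ℕ} (S : Fin n → Fin n → ℤ)
variable (hn2 : 2 ≤ n) (hsp : SignPattern S) (hund : ∀ u v, Underlying S u v ↔ D2 n u v)
variable (hsame : ∀ f g : ℕ → Fin n, IsCycleSeq (D2 n) f (n - 1) →
      IsCycleSeq (D2 n) g (n - 1) → walkSign S f (n - 1) = walkSign S g (n - 1))

include hn2 in
lemma lattice_step {X1 Y1 X2 Y2 : ℕ}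
    (h : n*X1 + (n-1)*Y1 = n*X2 + (n-1)*Y2) (hX : X1 < X2) :
    ∃ t : ℕ, 1 ≤ t ∧ X2 = X1 + (n-1)*t ∧ Y1 = Y2 + n*t := by
  have hn1 : (1:ℤ) ≤ (n:ℤ) - 1 := by
    have : (2:ℤ) ≤ (n:ℤ) := by exact_mod_cast hn2
    linarith
  have hZ : (n:ℤ) * X2 - (n:ℤ) * X1 = ((n:ℤ)-1) * Y1 - ((n:ℤ)-1) * Y2 := by
    have := congrArg (fun m : ℕ => (m : ℤ)) h
    push_cast at this
    rw [Nat.cast_sub (by omega : 1 ≤ n)] at this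
    push_cast at this
    linarith
  have hco : IsCoprime ((n:ℤ)-1) (n:ℤ) := ⟨-1, 1, by ring⟩
  have hdvd : ((n:ℤ)-1) ∣ (n:ℤ) * ((X2:ℤ) - X1) := by
    refine ⟨(Y1:ℤ) - Y2, ?_⟩
    linarith [hZ]
  have hdvd2 : ((n:ℤ)-1) ∣ ((X2:ℤ) - X1) := hco.dvd_of_dvd_mul_left hdvd
  obtain ⟨t, ht⟩ := hdvd2
  have htpos : 1 ≤ t := by nlinarith [ht]
  have hY : (Y1:ℤ) - Y2 = (n:ℤ) * t := by
    have hne : ((n:ℤ)-1) ≠ 0 := by linarith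
    apply mul_left_cancel₀ hne
    have : (n:ℤ) * ((X2:ℤ) - X1) = ((n:ℤ)-1) * ((Y1:ℤ) - Y2) := by linarith [hZ]
    rw [ht] at this
    linarith [this]
  refine ⟨t.toNat, by omega, ?_, ?_⟩
  · have : (X2:ℤ) = X1 + ((n:ℤ)-1) * t.toNat := by
      rw [Int.toNat_of_nonneg (by omega)]; linarith [ht]
    have h2 : ((X1 + (n-1)*t.toNat : ℕ) : ℤ) = (X1:ℤ) + ((n:ℤ)-1) * t.toNat := by
      push_cast [Nat.cast_sub (by omega : 1 ≤ n)]; ring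
    exact_mod_cast this.trans h2.symm
  · have : (Y1:ℤ) = Y2 + (n:ℤ) * t.toNat := by
      rw [Int.toNat_of_nonneg (by omega)]; linarith [hY]
    exact_mod_cast this

include hn2 hsp hund in
lemma eps_sq : (snn S (hn0 hn2) ^ (n-1) * spp S (hn0 hn2) ^ n)
    * (snn S (hn0 hn2) ^ (n-1) * spp S (hn0 hn2) ^ n) = 1 := by
  have h1 := snn_sq S hn2 hsp hund
  have h2 := spp_sq S hn2 hsp hund
  calc (snn S (hn0 hn2) ^ (n-1) * spp S (hn0 hn2) ^ n)
      * (snn S (hn0 hn2) ^ (n-1) * spp S (hn0 hn2) ^ n)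
      = (snn S (hn0 hn2) * snn S (hn0 hn2)) ^ (n-1)
        * (spp S (hn0 hn2) * spp S (hn0 hn2)) ^ n := by
        rw [mul_pow, mul_pow]; ring
    _ = 1 := by rw [h1, h2, one_pow, one_pow, mul_one]

include hn2 hsp hund in
lemma sign_eq_of_eps_one
    (heps : snn S (hn0 hn2) ^ (n-1) * spp S (hn0 hn2) ^ n = 1)
    {X1 Y1 X2 Y2 : ℕ} (h : n*X1 + (n-1)*Y1 = n*X2 + (n-1)*Y2) :
    snn S (hn0 hn2) ^ X1 * spp S (hn0 hn2) ^ Y1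
      = snn S (hn0 hn2) ^ X2 * spp S (hn0 hn2) ^ Y2 := by
  have hkey : snn S (hn0 hn2) ^ (n-1) = spp S (hn0 hn2) ^ n := by
    have h2 : spp S (hn0 hn2) ^ n * spp S (hn0 hn2) ^ n = 1 := by
      rw [← mul_pow, spp_sq S hn2 hsp hund, one_pow]
    calc snn S (hn0 hn2) ^ (n-1)
        = snn S (hn0 hn2) ^ (n-1) * (spp S (hn0 hn2) ^ n * spp S (hn0 hn2) ^ n) := by
          rw [h2, mul_one]
      _ = (snn S (hn0 hn2) ^ (n-1) * spp S (hn0 hn2) ^ n) * spp S (hn0 hn2) ^ n := by ring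
      _ = spp S (hn0 hn2) ^ n := by rw [heps, one_mul]
  have main : ∀ A1 B1 A2 B2 : ℕ, n*A1 + (n-1)*B1 = n*A2 + (n-1)*B2 → A1 < A2 →
      snn S (hn0 hn2) ^ A1 * spp S (hn0 hn2) ^ B1
        = snn S (hn0 hn2) ^ A2 * spp S (hn0 hn2) ^ B2 := by
    intro A1 B1 A2 B2 hh hlt
    obtain ⟨t, ht1, ht2, ht3⟩ := lattice_step hn2 hh hlt
    rw [ht2, ht3, pow_add, pow_add, pow_mul, pow_mul, hkey]
    ring
  rcases lt_trichotomy X1 X2 with hlt | heq | hgt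
  · exact main X1 Y1 X2 Y2 h hlt
  · subst heq
    have : Y1 = Y2 := by
      have : (n-1) * Y1 = (n-1) * Y2 := by omega
      exact Nat.eq_of_mul_eq_mul_left (by omega) this
    rw [this]
  · exact (main X2 Y2 X1 Y1 h.symm hgt).symm

include hn2 hsp hund hsame in
lemma eps_neg (hnp : NonPowerful S) :
    snn S (hn0 hn2) ^ (n-1) * spp S (hn0 hn2) ^ n = -1 := by
  have hsq := eps_sq S hn2 hsp hund
  rcases Int.isUnit_iff.mp (IsUnit.of_mul_eq_one _ hsq) with heps | heps
  · exfalso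
    obtain ⟨u, v, l, f, g, hf, hg, hne⟩ := hnp
    obtain ⟨X1, Y1, hl1, hs1⟩ := walk_struct S hn2 hsp hund hsame l f hf.2.2
    obtain ⟨X2, Y2, hl2, hs2⟩ := walk_struct S hn2 hsp hund hsame l g hg.2.2
    rw [hf.1, hf.2.1] at hl1 hs1
    rw [hg.1, hg.2.1] at hl2 hs2
    apply hne
    rw [hs1, hs2]
    have heq : n*X1 + (n-1)*Y1 = n*X2 + (n-1)*Y2 := by linarith [hl1, hl2]
    have hse := sign_eq_of_eps_one S hn2 hsp hund heps heq
    linear_combination (tau S (hn0 hn2) u * tau S (hn0 hn2) v) * hse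
  · exact heps

include hn2 hsp hund hsame in
lemma sssd_necessary {u v : Fin n} {l : ℕ} (h : HasSSSD S u v l) :
    ∃ A B : ℕ, l + u.val = n*A + (n-1)*(B+n) + v.val := by
  obtain ⟨f, g, hf, hg, hne⟩ := h
  obtain ⟨X1, Y1, hl1, hs1⟩ := walk_struct S hn2 hsp hund hsame l f hf.2.2
  obtain ⟨X2, Y2, hl2, hs2⟩ := walk_struct S hn2 hsp hund hsame l g hg.2.2
  rw [hf.1, hf.2.1] at hl1 hs1
  rw [hg.1, hg.2.1] at hl2 hs2
  have heq : n*X1 + (n-1)*Y1 = n*X2 + (n-1)*Y2 := by linarith [hl1, hl2]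
  rcases lt_trichotomy X1 X2 with hlt | hXeq | hgt
  · obtain ⟨t, ht1, ht2, ht3⟩ := lattice_step hn2 heq hlt
    have hY1 : n ≤ Y1 := by
      have : n * 1 ≤ n * t := Nat.mul_le_mul_left n ht1
      omega
    refine ⟨X1, Y1 - n, ?_⟩
    have h' : Y1 - n + n = Y1 := by omega
    rw [h']; exact hl1
  · exfalso
    apply hne
    rw [hs1, hs2, hXeq]
    have : Y1 = Y2 := by
      rw [hXeq] at heq
      have h' : (n-1) * Y1 = (n-1) * Y2 := by omega
      exact Nat.eq_of_mul_eq_mul_left (by omega) h'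
    rw [this]
  · obtain ⟨t, ht1, ht2, ht3⟩ := lattice_step hn2 heq.symm hgt
    have hY2 : n ≤ Y2 := by
      have : n * 1 ≤ n * t := Nat.mul_le_mul_left n ht1
      omega
    refine ⟨X2, Y2 - n, ?_⟩
    have h' : Y2 - n + n = Y2 := by omega
    rw [h']; exact hl2

end D2Aux
namespace D2Aux

variable {n : ℕ}

/-- concatenation of two walks. -/
def wcat (f g : ℕ → Fin n) (l : ℕ) : ℕ → Fin n := fun i => if i < l then f i else g (i - l)

/-- repetition of a closed walk. -/
def wrep (f : ℕ → Fin n) (l : ℕ) : ℕ → Fin n := fun i => f (i % l)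

lemma mul_add_mod' (m l c : ℕ) : (m * l + c) % l = c % l := by
  rw [mul_comm, Nat.mul_add_mod]

lemma mod_succ_eq {i l : ℕ} (h : i % l + 1 < l) : (i+1) % l = i % l + 1 := by
  conv_lhs => rw [← Nat.div_add_mod i l]
  rw [add_assoc, Nat.mul_add_mod]
  exact Nat.mod_eq_of_lt h

lemma mod_succ_zero {i l : ℕ} (h : i % l + 1 = l) : (i+1) % l = 0 := by
  conv_lhs => rw [← Nat.div_add_mod i l]
  rw [add_assoc, Nat.mul_add_mod, h, Nat.mod_self]

variable {A : Fin n → Fin n → Prop} {S : Fin n → Fin n → ℤ}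

lemma wcat_walk {f g : ℕ → Fin n} {u w v : Fin n} {l1 l2 : ℕ}
    (hf : IsWalkSeq A f u w l1) (hg : IsWalkSeq A g w v l2) :
    IsWalkSeq A (wcat f g l1) u v (l1 + l2) := by
  obtain ⟨hf0, hfl, hfw⟩ := hf
  obtain ⟨hg0, hgl, hgw⟩ := hg
  refine ⟨?_, ?_, ?_⟩
  · by_cases h : 0 < l1
    · simp only [wcat, if_pos h]; exact hf0
    · have : l1 = 0 := by omega
      subst this
      simp only [wcat, if_neg (by omega : ¬ (0:ℕ) < 0), Nat.sub_zero]
      rw [hg0, ← hfl, hf0]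
  · simp only [wcat, if_neg (by omega : ¬ l1 + l2 < l1), Nat.add_sub_cancel_left]
    exact hgl
  · intro i hi
    by_cases h : i + 1 < l1
    · simp only [wcat, if_pos (by omega : i < l1), if_pos h]
      exact hfw i (by omega)
    · by_cases h2 : i < l1
      · have hil : i + 1 = l1 := by omega
        have e1 : wcat f g l1 i = f i := by simp only [wcat, if_pos h2]
        have e2 : wcat f g l1 (i+1) = f (i+1) := by
          simp only [wcat, if_neg (by omega : ¬ i + 1 < l1)]
          rw [hil, Nat.sub_self, hg0, ← hfl]
        rw [e1, e2]
        exact hfw i (by omega)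
      · simp only [wcat, if_neg h2, if_neg (by omega : ¬ i + 1 < l1)]
        have h3 : i + 1 - l1 = (i - l1) + 1 := by omega
        rw [h3]
        exact hgw (i - l1) (by omega)

lemma wcat_sign {f g : ℕ → Fin n} {l1 l2 : ℕ} (hmatch : g 0 = f l1) :
    walkSign S (wcat f g l1) (l1 + l2) = walkSign S f l1 * walkSign S g l2 := by
  rw [walkSign, Finset.prod_range_add]
  congr 1
  · apply Finset.prod_congr rfl
    intro i hi
    simp only [Finset.mem_range] at hi
    by_cases h : i + 1 < l1
    · simp only [wcat, if_pos hi, if_pos h]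
    · have hil : i + 1 = l1 := by omega
      have e2 : wcat f g l1 (i+1) = f (i+1) := by
        simp only [wcat, if_neg (by omega : ¬ i + 1 < l1)]
        rw [hil, Nat.sub_self, hmatch]
      have e1 : wcat f g l1 i = f i := by simp only [wcat, if_pos hi]
      rw [e1, e2]
  · apply Finset.prod_congr rfl
    intro i hi
    simp only [wcat, if_neg (by omega : ¬ l1 + i < l1),
      if_neg (by omega : ¬ l1 + i + 1 < l1), Nat.add_sub_cancel_left]
    have h3 : l1 + i + 1 - l1 = i + 1 := by omega
    rw [h3]

lemma wrep_walk {f : ℕ → Fin n} {u : Fin n} {l : ℕ} (hl : 0 < l) (m : ℕ)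
    (hf : IsWalkSeq A f u u l) : IsWalkSeq A (wrep f l) u u (m * l) := by
  obtain ⟨hf0, hfl, hfw⟩ := hf
  refine ⟨?_, ?_, ?_⟩
  · simp only [wrep, Nat.zero_mod]; exact hf0
  · simp only [wrep, Nat.mul_mod_left]; exact hf0
  · intro i hi
    have h1 : i % l < l := Nat.mod_lt _ hl
    by_cases h : i % l + 1 < l
    · have h2 : (i+1) % l = i % l + 1 := mod_succ_eq h
      show A (f (i % l)) (f ((i+1) % l))
      rw [h2]
      exact hfw _ h1
    · have h2 : (i+1) % l = 0 := mod_succ_zero (by omega)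
      show A (f (i % l)) (f ((i+1) % l))
      rw [h2, hf0, ← hfl]
      have h3 : i % l + 1 = l := by omega
      have h4 := hfw (i % l) h1
      rwa [h3] at h4

lemma wrep_sign {f : ℕ → Fin n} {l : ℕ} (hclosed : f l = f 0) (m : ℕ) :
    walkSign S (wrep f l) (m * l) = (walkSign S f l) ^ m := by
  induction m with
  | zero => simp [walkSign]
  | succ m ih =>
    have hml : (m + 1) * l = m * l + l := by ring
    rw [hml, walkSign, Finset.prod_range_add, ← walkSign, ih, pow_succ]
    congr 1
    apply Finset.prod_congr rfl
    intro i hi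
    simp only [Finset.mem_range] at hi
    have h1 : (m * l + i) % l = i := by
      rw [mul_add_mod']
      exact Nat.mod_eq_of_lt hi
    have h1' : m * l + i + 1 = m * l + (i + 1) := by ring
    by_cases h : i + 1 < l
    · have h2 : (m * l + i + 1) % l = i + 1 := by
        rw [h1', mul_add_mod']
        exact Nat.mod_eq_of_lt h
      simp only [wrep, h1, h2]
    · have hil : i + 1 = l := by omega
      have h2 : (m * l + i + 1) % l = 0 := by
        rw [h1', hil, mul_add_mod', Nat.mod_self]
      simp only [wrep, h1, h2]
      rw [hil, hclosed]

end D2Aux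
namespace D2Aux

variable {n : ℕ} (S : Fin n → Fin n → ℤ)
variable (hn2 : 2 ≤ n) (hsp : SignPattern S) (hund : ∀ u v, Underlying S u v ↔ D2 n u v)
variable (hsame : ∀ f g : ℕ → Fin n, IsCycleSeq (D2 n) f (n - 1) →
      IsCycleSeq (D2 n) g (n - 1) → walkSign S f (n - 1) = walkSign S g (n - 1))

include hn2 hund in
lemma line_walk (x m : ℕ) (h : x + m ≤ n-1) :
    IsWalkSeq (Underlying S) (lineseq (hn0 hn2) x) (vtx (hn0 hn2) x) (vtx (hn0 hn2) (x+m)) m := by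
  refine ⟨rfl, rfl, ?_⟩
  intro i hi
  refine (hund _ _).mpr ?_
  show D2 n (vtx (hn0 hn2) (x+i)) (vtx (hn0 hn2) (x+(i+1)))
  have : x + (i+1) = (x+i) + 1 := by ring
  rw [this]
  exact line_arc hn2 (by omega)

include hn2 hsp hund in
lemma line_sign (x m : ℕ) (h : x + m ≤ n-1) :
    walkSign S (lineseq (hn0 hn2) x) m
      = tau S (hn0 hn2) (vtx (hn0 hn2) x) * tau S (hn0 hn2) (vtx (hn0 hn2) (x+m)) := by
  have hn := hn0 hn2
  have hW : walkSign S (lineseq hn x) m = ∏ i ∈ Finset.range m, lsg S hn (x+i) := by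
    apply Finset.prod_congr rfl
    intro i hi
    show S (vtx hn (x+i)) (vtx hn (x+(i+1))) = lsg S hn (x+i)
    have : x + (i+1) = (x+i) + 1 := by ring
    rw [this]; rfl
  have htau : tau S hn (vtx hn (x+m))
      = tau S hn (vtx hn x) * ∏ i ∈ Finset.range m, lsg S hn (x+i) := by
    rw [tau_vtx S hn2 _ (by omega), tau_vtx S hn2 _ (by omega), ← Finset.prod_range_add]
  have hsq := tau_sq S hn2 hsp hund (vtx hn x)
  rw [hW]
  linear_combination (-(∏ i ∈ Finset.range m, lsg S hn (x+i))) * hsq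
    - tau S hn (vtx hn x) * htau

include hn2 hund in
lemma e1end_walk (v : ℕ) (hv : v ≤ n-1) :
    IsWalkSeq (Underlying S) (e1seq (hn0 hn2)) (vtx (hn0 hn2) (n-1)) (vtx (hn0 hn2) v) (v+1) := by
  have hn := hn0 hn2
  refine ⟨rfl, ?_, ?_⟩
  · show (if v + 1 = 0 then _ else vtx hn (v+1-1)) = vtx hn v
    rw [if_neg (by omega : ¬ v + 1 = 0), Nat.add_sub_cancel]
  · intro i hi
    refine (hund _ _).mpr ?_
    rcases Nat.eq_zero_or_pos i with rfl | hip
    · show D2 n (e1seq hn 0) (e1seq hn 1)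
      have h0 : e1seq hn 0 = vtx hn (n-1) := rfl
      have h1 : e1seq hn 1 = vtx hn 0 := by simp [e1seq]
      rw [h0, h1]
      exact e1_arc hn2
    · have h0 : e1seq hn i = vtx hn (i-1) := by simp [e1seq, Nat.pos_iff_ne_zero.mp hip]
      have h1 : e1seq hn (i+1) = vtx hn ((i-1)+1) := by
        simp only [e1seq, if_neg (by omega : ¬ i + 1 = 0), Nat.add_sub_cancel]
        congr 1
        omega
      rw [h0, h1]
      exact line_arc hn2 (by omega)

include hn2 hsp hund in
lemma e1end_sign (v : ℕ) (hv : v ≤ n-1) :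
    walkSign S (e1seq (hn0 hn2)) (v+1)
      = snn S (hn0 hn2) * tau S (hn0 hn2) (vtx (hn0 hn2) (n-1)) * tau S (hn0 hn2) (vtx (hn0 hn2) v) := by
  have hn := hn0 hn2
  rw [walkSign, Finset.prod_range_succ']
  have h1 : ∀ i ∈ Finset.range v,
      S (e1seq hn (i+1)) (e1seq hn (i+1+1)) = lsg S hn i := by
    intro i hi
    simp only [Finset.mem_range] at hi
    have h0 : e1seq hn (i+1) = vtx hn i := by
      simp only [e1seq, if_neg (by omega : ¬ i + 1 = 0), Nat.add_sub_cancel]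
    have h2 : e1seq hn (i+1+1) = vtx hn (i+1) := by
      simp only [e1seq, if_neg (by omega : ¬ i + 1 + 1 = 0), Nat.add_sub_cancel]
    rw [h0, h2]; rfl
  rw [Finset.prod_congr rfl h1]
  have h2 : e1seq hn 0 = vtx hn (n-1) := rfl
  have h3 : e1seq hn 1 = vtx hn 0 := by simp [e1seq]
  rw [h2, h3, sn_arc S hn2 hsp hund, tau_vtx S hn2 v (by omega)]
  rw [tau]
  ring

include hn2 hsp hund in
lemma e1loop_walk : IsWalkSeq (Underlying S) (e1seq (hn0 hn2))
    (vtx (hn0 hn2) (n-1)) (vtx (hn0 hn2) (n-1)) n := by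
  have h := e1end_walk S hn2 hund (n-1) (le_refl _)
  rwa [show n - 1 + 1 = n by omega] at h

include hn2 hsp hund in
lemma e1loop_sign : walkSign S (e1seq (hn0 hn2)) n = snn S (hn0 hn2) := by
  have h := e1end_sign S hn2 hsp hund (n-1) (le_refl _)
  rw [show n - 1 + 1 = n by omega] at h
  rw [h, mul_assoc, tau_sq S hn2 hsp hund, mul_one]

include hn2 hund in
lemma e3loop_walk : IsWalkSeq (Underlying S) (e3seq (hn0 hn2))
    (vtx (hn0 hn2) (n-1)) (vtx (hn0 hn2) (n-1)) (n-1) := by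
  obtain ⟨hp, hcl, harc, _⟩ := e3_cycle (n := n) hn2
  refine ⟨rfl, ?_, fun i hi => (hund _ _).mpr (harc i hi)⟩
  rw [hcl]; rfl

include hn2 hund hsame in
lemma e3loop_sign : walkSign S (e3seq (hn0 hn2)) (n-1) = spp S (hn0 hn2) :=
  e3_sign S hn2 hsame

include hn2 hund in
lemma e3end_walk (v : ℕ) (hv1 : 1 ≤ v) (hv : v ≤ n-1) :
    IsWalkSeq (Underlying S) (e3seq (hn0 hn2)) (vtx (hn0 hn2) (n-1)) (vtx (hn0 hn2) v) v := by
  obtain ⟨hp, hcl, harc, _⟩ := e3_cycle (n := n) hn2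
  refine ⟨rfl, ?_, fun i hi => (hund _ _).mpr (harc i (by omega))⟩
  simp only [e3seq, if_neg (by omega : ¬ v = 0)]

include hn2 hsp hund hsame in
lemma e3end_sign (v : ℕ) (hv1 : 1 ≤ v) (hv : v ≤ n-1) :
    walkSign S (e3seq (hn0 hn2)) v
      = spp S (hn0 hn2) * tau S (hn0 hn2) (vtx (hn0 hn2) (n-1)) * tau S (hn0 hn2) (vtx (hn0 hn2) v) := by
  have hn := hn0 hn2
  rw [walkSign, show v = (v-1) + 1 by omega, Finset.prod_range_succ']
  have h1 : ∀ i ∈ Finset.range (v-1),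
      S (e3seq hn (i+1)) (e3seq hn (i+1+1)) = lsg S hn (i+1) := by
    intro i hi
    simp only [Finset.mem_range] at hi
    have h0 : e3seq hn (i+1) = vtx hn (i+1) := by simp [e3seq]
    have h2 : e3seq hn (i+1+1) = vtx hn (i+1+1) := by simp [e3seq]
    rw [h0, h2]; rfl
  rw [Finset.prod_congr rfl h1]
  have h2 : e3seq hn 0 = vtx hn (n-1) := rfl
  have h3 : e3seq hn 1 = vtx hn 1 := by simp [e3seq]
  rw [h2, h3, e3_arc_id S hn2 hsp hund hsame]
  have htv : tau S hn (vtx hn (v-1+1))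
      = (∏ i ∈ Finset.range (v-1), lsg S hn (i+1)) * lsg S hn 0 := by
    rw [tau_vtx S hn2 _ (by omega), Finset.prod_range_succ']
  have ht1 : tau S hn (vtx hn 1) = lsg S hn 0 := tau_v1 S hn2
  rw [htv, ht1]
  ring

include hn2 hund in
lemma c1loop_walk : IsWalkSeq (Underlying S) (c1seq (hn0 hn2))
    (vtx (hn0 hn2) 0) (vtx (hn0 hn2) 0) (n-1) := by
  obtain ⟨hp, hcl, harc, _⟩ := c1_cycle (n := n) hn2
  refine ⟨?_, ?_, fun i hi => (hund _ _).mpr (harc i hi)⟩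
  · show vtx (hn0 hn2) (0 % (n-1)) = vtx (hn0 hn2) 0
    rw [Nat.zero_mod]
  · show vtx (hn0 hn2) ((n-1) % (n-1)) = vtx (hn0 hn2) 0
    rw [Nat.mod_self]

include hn2 hund in
lemma c1loop_sign : walkSign S (c1seq (hn0 hn2)) (n-1) = spp S (hn0 hn2) :=
  c1_sign S hn2

include hn2 hund in
lemma e2seg_walk (x : ℕ) (hx : x ≤ n-2) :
    IsWalkSeq (Underlying S) (e2seq (hn0 hn2) x) (vtx (hn0 hn2) x) (vtx (hn0 hn2) 0) (n-1-x) := by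
  have hn := hn0 hn2
  refine ⟨?_, ?_, ?_⟩
  · simp only [e2seq, Nat.add_zero, if_pos hx]
  · simp only [e2seq, if_neg (by omega : ¬ x + (n-1-x) ≤ n-2)]
  · intro i hi
    refine (hund _ _).mpr ?_
    by_cases h : x + (i+1) ≤ n-2
    · have h0 : e2seq hn x i = vtx hn (x+i) := by simp only [e2seq, if_pos (by omega : x + i ≤ n-2)]
      have h1 : e2seq hn x (i+1) = vtx hn (x+(i+1)) := by simp only [e2seq, if_pos h]
      rw [h0, h1, show x + (i+1) = (x+i)+1 by ring]
      exact line_arc hn2 (by omega)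
    · have hxi : x + i = n - 2 := by omega
      have h0 : e2seq hn x i = vtx hn (n-2) := by
        unfold e2seq
        rw [if_pos (by omega : x + i ≤ n-2), hxi]
      have h1 : e2seq hn x (i+1) = vtx hn 0 := by
        simp only [e2seq, if_neg (by omega : ¬ x + (i+1) ≤ n-2)]
      rw [h0, h1]
      exact e2_arc hn2

include hn2 hsp hund in
lemma e2seg_sign (x : ℕ) (hx : x ≤ n-2) :
    walkSign S (e2seq (hn0 hn2) x) (n-1-x) = spp S (hn0 hn2) * tau S (hn0 hn2) (vtx (hn0 hn2) x) := by
  have hn := hn0 hn2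
  rw [walkSign, show n-1-x = (n-2-x) + 1 by omega, Finset.prod_range_succ]
  have h1 : ∀ i ∈ Finset.range (n-2-x),
      S (e2seq hn x i) (e2seq hn x (i+1)) = lsg S hn (x+i) := by
    intro i hi
    simp only [Finset.mem_range] at hi
    have h0 : e2seq hn x i = vtx hn (x+i) := by
      simp only [e2seq, if_pos (by omega : x + i ≤ n-2)]
    have h2 : e2seq hn x (i+1) = vtx hn ((x+i)+1) := by
      unfold e2seq
      rw [if_pos (by omega : x + (i+1) ≤ n-2), show x + (i+1) = x + i + 1 by ring]
    rw [h0, h2]; rfl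
  rw [Finset.prod_congr rfl h1]
  have h0 : e2seq hn x (n-2-x) = vtx hn (n-2) := by
    unfold e2seq
    rw [if_pos (by omega : x + (n-2-x) ≤ n-2), show x+(n-2-x) = n-2 by omega]
  have h2 : e2seq hn x (n-2-x+1) = vtx hn 0 := by
    simp only [e2seq, if_neg (by omega : ¬ x + (n-2-x+1) ≤ n-2)]
  rw [h0, h2, sp_arc S hn2 hsp hund]
  set P : ℤ := ∏ i ∈ Finset.range (n-2-x), lsg S hn (x+i) with hP
  have htau : tau S hn (vtx hn (n-2)) = tau S hn (vtx hn x) * P := by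
    rw [tau_vtx S hn2 _ (by omega), tau_vtx S hn2 _ (by omega), hP, ← Finset.prod_range_add,
      show x + (n-2-x) = n-2 by omega]
  have hPsq : P * P = 1 := by
    rw [hP, ← Finset.prod_mul_distrib]
    apply Finset.prod_eq_one
    intro i hi
    simp only [Finset.mem_range] at hi
    exact lsg_sq S hn2 hsp hund (by omega)
  rw [htau]
  linear_combination (spp S hn * tau S hn (vtx hn x)) * hPsq

end D2Aux
namespace D2Aux

variable {n : ℕ} (S : Fin n → Fin n → ℤ)
variable (hn2 : 2 ≤ n) (hsp : SignPattern S) (hund : ∀ u v, Underlying S u v ↔ D2 n u v)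
variable (hsame : ∀ f g : ℕ → Fin n, IsCycleSeq (D2 n) f (n - 1) →
      IsCycleSeq (D2 n) g (n - 1) → walkSign S f (n - 1) = walkSign S g (n - 1))

include hn2 hsp hund hsame in
/-- loops at vertex n-1 (A' many n-loops, B' many (n-1)-loops), then a given ending. -/
lemma loops_end (A' B' : ℕ) {endseq : ℕ → Fin n} {endlen : ℕ} {endsign : ℤ} {w : Fin n}
    (hend : IsWalkSeq (Underlying S) endseq (vtx (hn0 hn2) (n-1)) w endlen)
    (hs : walkSign S endseq endlen = endsign) :
    ∃ g : ℕ → Fin n, IsWalkSeq (Underlying S) g (vtx (hn0 hn2) (n-1)) w (A'*n + (B'*(n-1) + endlen))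
      ∧ walkSign S g (A'*n + (B'*(n-1) + endlen))
        = snn S (hn0 hn2) ^ A' * (spp S (hn0 hn2) ^ B' * endsign) := by
  have hn := hn0 hn2
  have hw1 := e1loop_walk S hn2 hsp hund
  have hw3 := e3loop_walk S hn2 hund
  have hr1 := wrep_walk (A := Underlying S) (by omega : 0 < n) A' hw1
  have hr3 := wrep_walk (A := Underlying S) (by omega : 0 < n-1) B' hw3
  have hrs1 : walkSign S (wrep (e1seq hn) n) (A'*n) = snn S hn ^ A' := by
    rw [wrep_sign (hw1.2.1.trans hw1.1.symm), e1loop_sign S hn2 hsp hund]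
  have hrs3 : walkSign S (wrep (e3seq hn) (n-1)) (B'*(n-1)) = spp S hn ^ B' := by
    rw [wrep_sign (hw3.2.1.trans hw3.1.symm), e3loop_sign S hn2 hund hsame]
  -- inner: e3-loops then ending
  have hin := wcat_walk hr3 hend
  have hins : walkSign S (wcat (wrep (e3seq hn) (n-1)) endseq (B'*(n-1))) (B'*(n-1) + endlen)
      = spp S hn ^ B' * endsign := by
    rw [wcat_sign (by rw [hend.1, hr3.2.1]), hrs3, hs]
  -- outer: e1-loops then inner
  have hout := wcat_walk hr1 hin
  refine ⟨_, hout, ?_⟩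
  rw [wcat_sign (by rw [hin.1, hr1.2.1]), hrs1, hins]

include hn2 hsp hund hsame in
/-- walk from u with counts (A'+1, B') : line to n-1, loops, e1-ending to v. -/
lemma std_walk (A' B' : ℕ) (u v : Fin n) :
    ∃ g : ℕ → Fin n,
      IsWalkSeq (Underlying S) g u v ((n-1-u.val) + (A'*n + (B'*(n-1) + (v.val+1))))
      ∧ walkSign S g ((n-1-u.val) + (A'*n + (B'*(n-1) + (v.val+1))))
        = (tau S (hn0 hn2) (vtx (hn0 hn2) u.val) * tau S (hn0 hn2) (vtx (hn0 hn2) (n-1)))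
          * (snn S (hn0 hn2) ^ A' * (spp S (hn0 hn2) ^ B'
            * (snn S (hn0 hn2) * tau S (hn0 hn2) (vtx (hn0 hn2) (n-1))
              * tau S (hn0 hn2) (vtx (hn0 hn2) v.val)))) := by
  have hn := hn0 hn2
  have hend := e1end_walk S hn2 hund v.val (by omega)
  have hends := e1end_sign S hn2 hsp hund v.val (by omega)
  rw [show vtx hn v.val = v from vtx_self hn v] at hend
  obtain ⟨g, hg, hgs⟩ := loops_end S hn2 hsp hund hsame A' B' hend hends
  have hline := line_walk S hn2 hund u.val (n-1-u.val) (by omega)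
  rw [show u.val + (n-1-u.val) = n-1 by omega] at hline
  have hlines := line_sign S hn2 hsp hund u.val (n-1-u.val) (by omega)
  rw [show u.val + (n-1-u.val) = n-1 by omega] at hlines
  rw [show vtx hn u.val = u from vtx_self hn u] at hline
  have htot := wcat_walk hline hg
  refine ⟨_, htot, ?_⟩
  rw [wcat_sign (by rw [hg.1, hline.2.1]), hlines, hgs]

end D2Aux
namespace D2Aux

variable {n : ℕ} (S : Fin n → Fin n → ℤ)
variable (hn2 : 2 ≤ n) (hsp : SignPattern S) (hund : ∀ u v, Underlying S u v ↔ D2 n u v)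
variable (hsame : ∀ f g : ℕ → Fin n, IsCycleSeq (D2 n) f (n - 1) →
      IsCycleSeq (D2 n) g (n - 1) → walkSign S f (n - 1) = walkSign S g (n - 1))

include hn2 hsp hund in
/-- walk from u (≤ n-2) with counts (0, B'+1) : e2-segment to 0, C1-loops, line to v. -/
lemma low_walk (B' : ℕ) (u v : Fin n) (hu : u.val ≤ n-2) :
    ∃ g : ℕ → Fin n,
      IsWalkSeq (Underlying S) g u v ((n-1-u.val) + (B'*(n-1) + v.val))
      ∧ walkSign S g ((n-1-u.val) + (B'*(n-1) + v.val))
        = (spp S (hn0 hn2) * tau S (hn0 hn2) (vtx (hn0 hn2) u.val))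
          * (spp S (hn0 hn2) ^ B'
            * (tau S (hn0 hn2) (vtx (hn0 hn2) 0) * tau S (hn0 hn2) (vtx (hn0 hn2) v.val))) := by
  have hn := hn0 hn2
  have hseg := e2seg_walk S hn2 hund u.val hu
  rw [show vtx hn u.val = u from vtx_self hn u] at hseg
  have hsegs := e2seg_sign S hn2 hsp hund u.val hu
  have hloop := c1loop_walk S hn2 hund
  have hr := wrep_walk (A := Underlying S) (by omega : 0 < n-1) B' hloop
  have hrs : walkSign S (wrep (c1seq hn) (n-1)) (B'*(n-1)) = spp S hn ^ B' := by
    rw [wrep_sign (hloop.2.1.trans hloop.1.symm), c1loop_sign S hn2 hund]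
  have hline := line_walk S hn2 hund 0 v.val (by omega)
  rw [show (0:ℕ) + v.val = v.val by omega] at hline
  have hlines := line_sign S hn2 hsp hund 0 v.val (by omega)
  rw [show (0:ℕ) + v.val = v.val by omega] at hlines
  rw [show vtx hn v.val = v from vtx_self hn v] at hline
  have hin := wcat_walk hr hline
  have hins : walkSign S (wcat (wrep (c1seq hn) (n-1)) (lineseq hn 0) (B'*(n-1)))
      (B'*(n-1) + v.val)
      = spp S hn ^ B' * (tau S hn (vtx hn 0) * tau S hn (vtx hn v.val)) := by
    rw [wcat_sign (by rw [hline.1, hr.2.1]), hrs, hlines]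
  have htot := wcat_walk hseg hin
  refine ⟨_, htot, ?_⟩
  rw [wcat_sign (by rw [hin.1, hseg.2.1]), hsegs, hins]

include hn2 hsp hund hsame in
/-- walk from n-1 with counts (0, B'+1) : e3-loops then e3-ending to v ≥ 1. -/
lemma high_walk (B' : ℕ) (u v : Fin n) (hu : u.val = n-1) (hv : 1 ≤ v.val) :
    ∃ g : ℕ → Fin n,
      IsWalkSeq (Underlying S) g u v (0*n + (B'*(n-1) + v.val))
      ∧ walkSign S g (0*n + (B'*(n-1) + v.val))
        = snn S (hn0 hn2) ^ 0 * (spp S (hn0 hn2) ^ B'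
          * (spp S (hn0 hn2) * tau S (hn0 hn2) (vtx (hn0 hn2) (n-1))
            * tau S (hn0 hn2) (vtx (hn0 hn2) v.val))) := by
  have hn := hn0 hn2
  have hend := e3end_walk S hn2 hund v.val hv (by omega)
  rw [show vtx hn v.val = v from vtx_self hn v] at hend
  have hends := e3end_sign S hn2 hsp hund hsame v.val hv (by omega)
  obtain ⟨g, hg, hgs⟩ := loops_end S hn2 hsp hund hsame 0 B' hend hends
  have huv : vtx hn (n-1) = u := by
    rw [← hu]; exact vtx_self hn u
  rw [huv] at hg
  exact ⟨g, hg, hgs⟩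

lemma ne_of_mul_eq_neg_one {x y : ℤ} (h : x * y = -1) : x ≠ y := by
  intro he
  rw [he] at h
  linarith [mul_self_nonneg y]

set_option maxHeartbeats 1600000 in
include hn2 hsp hund hsame in
lemma sssd_of {u v : Fin n} {l A B : ℕ} (hnp : NonPowerful S)
    (hl : l + u.val = n*A + (n-1)*(B+n) + v.val)
    (hside : 1 ≤ A ∨ u.val ≤ n-2 ∨ 1 ≤ v.val) :
    HasSSSD S u v l := by
  have hn := hn0 hn2
  have heps := eps_neg S hn2 hsp hund hsame hnp
  have ha := tau_sq S hn2 hsp hund (vtx hn u.val)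
  have ht := tau_sq S hn2 hsp hund (vtx hn (n-1))
  have hw := tau_sq S hn2 hsp hund (vtx hn v.val)
  have hss := snn_sq S hn2 hsp hund
  have hpp := spp_sq S hn2 hsp hund
  have hs2 : snn S hn ^ 2 = 1 := by rw [pow_two]; exact hss
  have hp2 : spp S hn ^ 2 = 1 := by rw [pow_two]; exact hpp
  have hult : u.val < n := u.isLt
  have hvlt : v.val < n := v.isLt
  have hlZ : (l:ℤ) + u.val = n*A + ((n:ℤ)-1)*(B+n) + v.val := by
    zify [show 1 ≤ n by omega] at hl
    linarith [hl]
  -- walk 2 : counts (A + n - 1, B)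
  obtain ⟨g2, hg2, hg2s⟩ := std_walk S hn2 hsp hund hsame (A+n-2) B u v
  have hL2 : (n-1-u.val) + ((A+n-2)*n + (B*(n-1) + (v.val+1))) = l := by
    zify [show u.val ≤ n-1 by omega, show 1 ≤ n by omega, show 2 ≤ A + n by omega]
    linarith [hlZ]
  rw [hL2] at hg2 hg2s
  by_cases hA : 1 ≤ A
  · -- walk 1 : counts (A, B + n) via std_walk (A-1) (B+n)
    obtain ⟨g1, hg1, hg1s⟩ := std_walk S hn2 hsp hund hsame (A-1) (B+n) u v
    have hL1 : (n-1-u.val) + ((A-1)*n + ((B+n)*(n-1) + (v.val+1))) = l := by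
      zify [show u.val ≤ n-1 by omega, show 1 ≤ n by omega, show 1 ≤ A from hA]
      linarith [hlZ]
    rw [hL1] at hg1 hg1s
    refine ⟨g1, g2, hg1, hg2, ?_⟩
    rw [hg1s, hg2s]
    apply ne_of_mul_eq_neg_one
    have h1 : (tau S hn (vtx hn u.val) * tau S hn (vtx hn (n-1)))
        * (snn S hn ^ (A-1) * (spp S hn ^ (B+n)
          * (snn S hn * tau S hn (vtx hn (n-1)) * tau S hn (vtx hn v.val))))
        * ((tau S hn (vtx hn u.val) * tau S hn (vtx hn (n-1)))
        * (snn S hn ^ (A+n-2) * (spp S hn ^ B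
          * (snn S hn * tau S hn (vtx hn (n-1)) * tau S hn (vtx hn v.val)))))
        = (tau S hn (vtx hn u.val) * tau S hn (vtx hn u.val))
          * ((tau S hn (vtx hn (n-1)) * tau S hn (vtx hn (n-1)))
            * ((tau S hn (vtx hn (n-1)) * tau S hn (vtx hn (n-1)))
              * ((tau S hn (vtx hn v.val) * tau S hn (vtx hn v.val))
                * ((snn S hn * snn S hn)
                  * (snn S hn ^ ((A-1)+(A+n-2)) * spp S hn ^ ((B+n)+B)))))) := by
      ring
    rw [h1, ha, ht, hw, hss]
    simp only [one_mul]
    rw [show (A-1)+(A+n-2) = 2*(A-1) + (n-1) by omega,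
      show (B+n)+B = 2*B + n by omega,
      pow_add, pow_add, pow_mul, pow_mul, hs2, hp2, one_pow, one_pow, one_mul, one_mul]
    exact heps
  · -- A = 0
    have hA0 : A = 0 := by omega
    subst hA0
    by_cases hu : u.val ≤ n-2
    · -- low walk : counts (0, B+n) via low_walk (B+n-1)
      obtain ⟨g1, hg1, hg1s⟩ := low_walk S hn2 hsp hund (B+n-1) u v hu
      have hL1 : (n-1-u.val) + ((B+n-1)*(n-1) + v.val) = l := by
        zify [show u.val ≤ n-1 by omega, show 1 ≤ n by omega, show 1 ≤ B + n by omega]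
        push_cast at hlZ ⊢
        linarith [hlZ]
      rw [hL1] at hg1 hg1s
      rw [tau_v0 S hn2] at hg1s
      refine ⟨g1, g2, hg1, hg2, ?_⟩
      rw [hg1s, hg2s]
      apply ne_of_mul_eq_neg_one
      have h1 : (spp S hn * tau S hn (vtx hn u.val))
          * (spp S hn ^ (B+n-1) * (1 * tau S hn (vtx hn v.val)))
          * ((tau S hn (vtx hn u.val) * tau S hn (vtx hn (n-1)))
          * (snn S hn ^ (0+n-2) * (spp S hn ^ B
            * (snn S hn * tau S hn (vtx hn (n-1)) * tau S hn (vtx hn v.val)))))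
          = (tau S hn (vtx hn u.val) * tau S hn (vtx hn u.val))
            * ((tau S hn (vtx hn (n-1)) * tau S hn (vtx hn (n-1)))
              * ((tau S hn (vtx hn v.val) * tau S hn (vtx hn v.val))
                * ((snn S hn ^ ((0+n-2)+1))
                  * (spp S hn * spp S hn ^ ((B+n-1)+B))))) := by
        rw [pow_succ]; ring
      rw [h1, ha, ht, hw]
      simp only [one_mul]
      rw [show (0+n-2)+1 = n-1 by omega]
      have h2 : spp S hn * spp S hn ^ ((B+n-1)+B) = spp S hn ^ (2*B + n) := by
        rw [← pow_succ']
        congr 1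
        omega
      rw [h2, show 2*B + n = 2*B + n from rfl, pow_add, pow_mul, hp2, one_pow, one_mul]
      exact heps
    · -- u.val = n-1, so 1 ≤ v.val from hside
      have hun : u.val = n-1 := by omega
      have hv1 : 1 ≤ v.val := by
        rcases hside with h | h | h
        · omega
        · omega
        · exact h
      obtain ⟨g1, hg1, hg1s⟩ := high_walk S hn2 hsp hund hsame (B+n-1) u v hun hv1
      have hL1 : 0*n + ((B+n-1)*(n-1) + v.val) = l := by
        zify [show 1 ≤ n by omega, show 1 ≤ B + n by omega]
        push_cast at hlZ ⊢
        have huZ : ((u.val : ℕ) : ℤ) = (n:ℤ) - 1 := by omega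
        linarith [hlZ, huZ]
      rw [hL1] at hg1 hg1s
      refine ⟨g1, g2, hg1, hg2, ?_⟩
      rw [hg1s, hg2s]
      have htu : tau S hn (vtx hn u.val) = tau S hn (vtx hn (n-1)) := by rw [hun]
      rw [htu]
      apply ne_of_mul_eq_neg_one
      have h1 : snn S hn ^ 0 * (spp S hn ^ (B+n-1)
          * (spp S hn * tau S hn (vtx hn (n-1)) * tau S hn (vtx hn v.val)))
          * ((tau S hn (vtx hn (n-1)) * tau S hn (vtx hn (n-1)))
          * (snn S hn ^ (0+n-2) * (spp S hn ^ B
            * (snn S hn * tau S hn (vtx hn (n-1)) * tau S hn (vtx hn v.val)))))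
          = (tau S hn (vtx hn (n-1)) * tau S hn (vtx hn (n-1)))
            * ((tau S hn (vtx hn (n-1)) * tau S hn (vtx hn (n-1)))
              * ((tau S hn (vtx hn v.val) * tau S hn (vtx hn v.val))
                * ((snn S hn ^ ((0+n-2)+1))
                  * (spp S hn * spp S hn ^ ((B+n-1)+B))))) := by
        rw [pow_succ, pow_zero]; ring
      rw [h1, ht, hw]
      simp only [one_mul]
      rw [show (0+n-2)+1 = n-1 by omega]
      have h2 : spp S hn * spp S hn ^ ((B+n-1)+B) = spp S hn ^ (2*B + n) := by
        rw [← pow_succ']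
        congr 1
        omega
      rw [h2, pow_add, pow_mul, hp2, one_pow, one_mul]
      exact heps

end D2Aux
namespace D2Aux

variable {n : ℕ} (S : Fin n → Fin n → ℤ)
variable (hn2 : 2 ≤ n) (hsp : SignPattern S) (hund : ∀ u v, Underlying S u v ↔ D2 n u v)
variable (hsame : ∀ f g : ℕ → Fin n, IsCycleSeq (D2 n) f (n - 1) →
      IsCycleSeq (D2 n) g (n - 1) → walkSign S f (n - 1) = walkSign S g (n - 1))

lemma phi_eq (hn2 : 2 ≤ n) (x v : Fin n) : (x.val + n - v.val) % n
    = if x.val < v.val then x.val + n - v.val else x.val - v.val := by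
  have hx := x.isLt
  have hv := v.isLt
  split_ifs with h
  · exact Nat.mod_eq_of_lt (by omega)
  · rw [show x.val + n - v.val = (x.val - v.val) + n by omega, Nat.add_mod_right]
    exact Nat.mod_eq_of_lt (by omega)

include hn2 hsp hund hsame in
lemma cover_at_P {k : ℕ} (hk1 : 1 ≤ k) (hkn : k ≤ n) (hnp : NonPowerful S)
    (X : Finset (Fin n)) (hX : X.card = k) (v : Fin n) :
    ∃ x ∈ X, HasSSSD S x v ((2*n - k) * (n-1)) := by
  have hgood : ∃ x ∈ X, (x.val + n - v.val) % n ≤ n - k := by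
    by_contra hcon
    push_neg at hcon
    have hinj : ∀ x1 ∈ X, ∀ x2 ∈ X,
        (x1.val + n - v.val) % n = (x2.val + n - v.val) % n → x1 = x2 := by
      intro x1 _ x2 _ heq
      rw [phi_eq hn2 x1 v, phi_eq hn2 x2 v] at heq
      apply Fin.ext
      have := x1.isLt
      have := x2.isLt
      have := v.isLt
      split_ifs at heq <;> omega
    have hmaps : ∀ x ∈ X, (x.val + n - v.val) % n ∈ Finset.Ico (n-k+1) n := by
      intro x hx
      rw [Finset.mem_Ico]
      exact ⟨by have := hcon x hx; omega, Nat.mod_lt _ (by omega)⟩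
    have hcard := Finset.card_le_card_of_injOn _ hmaps
      (fun x1 h1 x2 h2 => hinj x1 h1 x2 h2)
    rw [hX, Nat.card_Ico] at hcard
    omega
  obtain ⟨x, hxX, hr⟩ := hgood
  refine ⟨x, hxX, ?_⟩
  have hx := x.isLt
  have hv := v.isLt
  rcases le_or_gt v.val x.val with hge | hlt
  · have hr' : x.val - v.val ≤ n - k := by
      rw [phi_eq hn2 x v, if_neg (by omega)] at hr
      exact hr
    apply sssd_of S hn2 hsp hund hsame hnp
      (A := x.val - v.val) (B := n - k - (x.val - v.val))
    · zify [show k ≤ 2*n by omega, show 1 ≤ n by omega, show v.val ≤ x.val from hge,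
        show x.val - v.val ≤ n - k from hr', show k ≤ n from hkn]
      ring
    · omega
  · have hr' : k ≤ v.val - x.val := by
      rw [phi_eq hn2 x v, if_pos hlt] at hr
      omega
    apply sssd_of S hn2 hsp hund hsame hnp
      (A := n - 1 - (v.val - x.val)) (B := (v.val - x.val) - k)
    · zify [show k ≤ 2*n by omega, show 1 ≤ n by omega, show x.val ≤ v.val by omega,
        show v.val - x.val ≤ n - 1 by omega, show k ≤ v.val - x.val from hr']
      ring
    · omega

set_option maxHeartbeats 1600000 in
include hn2 hsp hund hsame in
lemma fail_below_P {k : ℕ} (hk1 : 1 ≤ k) (hkn : k ≤ n) (q : ℕ)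
    (hq : q < (2*n - k) * (n-1)) :
    ∃ v : Fin n, ∀ x ∈ insert (⟨0, by omega⟩ : Fin n) (Finset.Ioi (⟨n-k, by omega⟩ : Fin n)),
      ¬ HasSSSD S x v q := by
  have hn1Z : (1:ℤ) ≤ (n:ℤ) - 1 := by
    have : (2:ℤ) ≤ (n:ℤ) := by exact_mod_cast hn2
    linarith
  set Q : ℤ := (q:ℤ) - n*((n:ℤ)-1) with hQ
  have hEnn : 0 ≤ Q % ((n:ℤ)-1) := Int.emod_nonneg Q (by omega)
  have hElt : Q % ((n:ℤ)-1) < (n:ℤ)-1 := Int.emod_lt_of_pos Q (by omega)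
  set m : ℕ := (Q % ((n:ℤ)-1)).toNat + 1 with hm
  have hm1 : 1 ≤ m := by omega
  have hmn : m ≤ n - 1 := by
    have : (Q % ((n:ℤ)-1)).toNat < n - 1 := by omega
    omega
  refine ⟨⟨m, by omega⟩, ?_⟩
  intro x hx hSSSD
  obtain ⟨A, B, hAB⟩ := sssd_necessary S hn2 hsp hund hsame hSSSD
  -- cast to ℤ
  have hABZ : (q:ℤ) + x.val = n*A + ((n:ℤ)-1)*(B+n) + m := by
    have := congrArg (fun t : ℕ => (t:ℤ)) hAB
    push_cast at this
    rw [Nat.cast_sub (by omega : 1 ≤ n)] at this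
    push_cast at this
    exact_mod_cast this
  set D : ℤ := Q / ((n:ℤ)-1) with hD
  have hQD : ((n:ℤ)-1) * D + Q % ((n:ℤ)-1) = Q := Int.mul_ediv_add_emod Q ((n:ℤ)-1)
  have hmZ : (m:ℤ) = Q % ((n:ℤ)-1) + 1 := by
    rw [hm]
    push_cast [Int.toNat_of_nonneg hEnn]
    ring
  -- key equation
  have hkey : (n:ℤ)*A + ((n:ℤ)-1)*B = ((n:ℤ)-1)*D + (x.val : ℤ) - 1 := by
    have : Q + x.val = (n:ℤ)*A + ((n:ℤ)-1)*B + m := by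
      rw [hQ]
      linarith [hABZ]
    rw [hmZ] at this
    linarith [hQD, this]
  -- bound on D
  have hQub : Q ≤ ((n:ℤ)-k)*((n:ℤ)-1) - 1 := by
    have hqZ : (q:ℤ) ≤ (2*(n:ℤ)-k)*((n:ℤ)-1) - 1 := by
      have h1 : (q:ℤ) < ((2*n-k) * (n-1) : ℕ) := by exact_mod_cast hq
      have h2 : (((2*n-k) * (n-1) : ℕ) : ℤ) = (2*(n:ℤ)-k)*((n:ℤ)-1) := by
        push_cast [Nat.cast_sub (by omega : k ≤ 2*n), Nat.cast_sub (by omega : 1 ≤ n)]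
        ring
      linarith [h1, h2.ge, h2.le]
    rw [hQ]
    nlinarith [hqZ]
  have hDub : D ≤ (n:ℤ) - k - 1 := by
    by_contra hcon
    push_neg at hcon
    have h1 : ((n:ℤ)-1) * ((n:ℤ)-k) ≤ ((n:ℤ)-1) * D :=
      mul_le_mul_of_nonneg_left (by linarith) (by linarith)
    linarith [hEnn, hQD, hQub]
  have hA0 : (0:ℤ) ≤ (A:ℤ) := Int.natCast_nonneg A
  have hB0 : (0:ℤ) ≤ (B:ℤ) := Int.natCast_nonneg B
  -- case on x
  rw [Finset.mem_insert] at hx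
  have hkZ : (1:ℤ) ≤ (k:ℤ) := by exact_mod_cast hk1
  have hknZ : (k:ℤ) ≤ (n:ℤ) := by exact_mod_cast hkn
  rcases hx with hx0 | hxIoi
  · -- x = 0
    have hxv : (x.val : ℤ) = 0 := by rw [hx0]; simp
    rw [hxv] at hkey
    set t : ℤ := D - A - B with ht
    have hAt : (A:ℤ) + 1 = ((n:ℤ)-1) * t := by
      rw [ht]
      linarith [hkey]
    have ht1 : 1 ≤ t := by
      by_contra hc
      push_neg at hc
      have : ((n:ℤ)-1) * t ≤ 0 := mul_nonpos_of_nonneg_of_nonpos (by linarith) (by linarith)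
      linarith
    have hAge : (n:ℤ) - 2 ≤ (A:ℤ) := by
      have : ((n:ℤ)-1) * 1 ≤ ((n:ℤ)-1) * t := mul_le_mul_of_nonneg_left ht1 (by linarith)
      linarith
    have hnA : (n:ℤ) * ((n:ℤ)-2) ≤ (n:ℤ) * A := mul_le_mul_of_nonneg_left hAge (by linarith)
    -- then (n-1)*D - 1 = nA + (n-1)B ≥ n(n-2)  ⇒  D ≥ n-1, contradiction
    have hDge : ((n:ℤ)-1) * ((n:ℤ)-1) ≤ ((n:ℤ)-1) * D := by nlinarith [hkey, hnA, hB0]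
    have : (n:ℤ)-1 ≤ D := le_of_mul_le_mul_left hDge (by linarith)
    linarith
  · -- n-k < x.val
    rw [Finset.mem_Ioi] at hxIoi
    have hxval : n - k < x.val := hxIoi
    have hxlt := x.isLt
    set j : ℤ := (n:ℤ) - 1 - x.val with hj
    have hj0 : 0 ≤ j := by
      rw [hj]
      have h' : (x.val : ℤ) < (n:ℤ) := by exact_mod_cast x.isLt
      linarith
    have hjk : j ≤ (k:ℤ) - 2 := by
      rw [hj]
      have : ((n:ℤ)) - k + 1 ≤ (x.val : ℤ) := by
        have hnk : (n:ℤ) - k = ((n - k : ℕ) : ℤ) := by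
          push_cast [Nat.cast_sub (by omega : k ≤ n)]
          ring
        rw [hnk]
        exact_mod_cast (by omega : n - k + 1 ≤ x.val)
      linarith
    have hxj : (x.val : ℤ) = (n:ℤ) - 1 - j := by rw [hj]; ring
    rw [hxj] at hkey
    set t : ℤ := D + 1 - A - B with ht
    have hAt : (A:ℤ) + 1 + j = ((n:ℤ)-1) * t := by
      rw [ht]
      linarith [hkey]
    have ht1 : 1 ≤ t := by
      by_contra hc
      push_neg at hc
      have : ((n:ℤ)-1) * t ≤ 0 := mul_nonpos_of_nonneg_of_nonpos (by linarith) (by linarith)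
      linarith
    have hAge : (n:ℤ) - 2 - j ≤ (A:ℤ) := by
      have : ((n:ℤ)-1) * 1 ≤ ((n:ℤ)-1) * t := mul_le_mul_of_nonneg_left ht1 (by linarith)
      linarith
    have hnA : (n:ℤ) * ((n:ℤ)-2-j) ≤ (n:ℤ) * A := mul_le_mul_of_nonneg_left hAge (by linarith)
    have hDge : ((n:ℤ)-1) * ((n:ℤ)-1-j) ≤ ((n:ℤ)-1) * (D + 1) := by nlinarith [hkey, hnA, hB0]
    have : (n:ℤ)-1-j ≤ D + 1 := le_of_mul_le_mul_left hDge (by linarith)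
    linarith

end D2Aux

/-- Theorem 3.2(2): if the two cycles of length `n-1` of `S₂` have the same sign,
then `L(S₂,k) = (2n-k)(n-1)`. -/
theorem upperBase_D2_same_signs {n : ℕ} (hn : 2 ≤ n) (k : ℕ) (hk1 : 1 ≤ k) (hkn : k ≤ n)
    (S : Fin n → Fin n → ℤ) (hsp : SignPattern S)
    (hund : ∀ u v, Underlying S u v ↔ D2 n u v)
    (hprim : Primitive (Underlying S)) (hnp : NonPowerful S)
    (hsame : ∀ f g : ℕ → Fin n, IsCycleSeq (D2 n) f (n - 1) →
      IsCycleSeq (D2 n) g (n - 1) → walkSign S f (n - 1) = walkSign S g (n - 1)) :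
    upperBase S k = (2 * n - k) * (n - 1) := by
  classical
  set P := (2 * n - k) * (n - 1) with hP
  have hcov : ∀ X : Finset (Fin n), X.card = k → ∀ v : Fin n, ∃ x ∈ X, HasSSSD S x v P :=
    fun X hX v => D2Aux.cover_at_P S hn hsp hund hsame hk1 hkn hnp X hX v
  have hsb_le : ∀ X : Finset (Fin n), X.card = k → setBase S X ≤ P := by
    intro X hX
    exact Nat.sInf_le (hcov X hX)
  set X₀ : Finset (Fin n) :=
    insert (⟨0, by omega⟩ : Fin n) (Finset.Ioi (⟨n-k, by omega⟩ : Fin n)) with hX₀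
  have h0notin : (⟨0, by omega⟩ : Fin n) ∉ Finset.Ioi (⟨n-k, by omega⟩ : Fin n) := by
    rw [Finset.mem_Ioi]
    intro hcon
    rw [Fin.lt_def] at hcon
    simp at hcon
  have hcard : X₀.card = k := by
    rw [hX₀, Finset.card_insert_of_notMem h0notin, Fin.card_Ioi]
    simp only []
    show n - 1 - (n - k) + 1 = k
    omega
  have hbase : setBase S X₀ = P := by
    apply le_antisymm (hsb_le X₀ hcard)
    by_contra hcon
    push_neg at hcon
    have hne : {p | ∀ v, ∃ x ∈ X₀, HasSSSD S x v p}.Nonempty := ⟨P, hcov X₀ hcard⟩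
    have hmem : setBase S X₀ ∈ {p | ∀ v, ∃ x ∈ X₀, HasSSSD S x v p} := Nat.sInf_mem hne
    obtain ⟨v, hv⟩ := D2Aux.fail_below_P S hn hsp hund hsame hk1 hkn (setBase S X₀) hcon
    obtain ⟨x, hxX, hSS⟩ := hmem v
    exact hv x (by rw [← hX₀]; exact hxX) hSS
  have hPmem : P ∈ {e | ∃ X : Finset (Fin n), X.card = k ∧ setBase S X = e} :=
    ⟨X₀, hcard, hbase⟩
  apply le_antisymm
  · apply csSup_le ⟨P, hPmem⟩
    rintro e ⟨X, hXc, rfl⟩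
    exact hsb_le X hXc
  · exact le_csSup ⟨P, fun e he => by obtain ⟨X, hXc, hXe⟩ := he; exact hXe ▸ hsb_le X hXc⟩
      hPmem
end

section
/- For every 1 ≤ k ≤ n, the kth upper multiexponent of a primitive digraph D of order n satisfies F(D,k) ≤ (n-k)(n-1) + 1. -/
/-! ### Auxiliary lemmas for Lemma 2.2 -/

open scoped Classical

section WalkAux

variable {n : ℕ} {A : Fin n → Fin n → Prop}

lemma hasWalk_refl (u : Fin n) : HasWalk A u u 0 :=
  ⟨fun _ => u, rfl, rfl, fun i hi => absurd hi (by omega)⟩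

lemma hasWalk_arc {u v : Fin n} (h : A u v) : HasWalk A u v 1 := by
  refine ⟨fun i => if i = 0 then u else v, by simp, by simp, ?_⟩
  intro i hi
  have : i = 0 := by omega
  simp [this, h]

lemma hasWalk_split {u v : Fin n} {p q : ℕ} (h : HasWalk A u v (p + q)) :
    ∃ z, HasWalk A u z p ∧ HasWalk A z v q := by
  obtain ⟨f, hf0, hfl, hfa⟩ := h
  refine ⟨f p, ⟨f, hf0, rfl, fun i hi => hfa i (by omega)⟩,
    ⟨fun i => f (p + i), rfl, hfl, ?_⟩⟩
  intro i hi
  have : A (f (p + i)) (f (p + i + 1)) := hfa (p + i) (by omega)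
  simpa [Nat.add_assoc] using this

lemma hasWalk_succ {u v w : Fin n} {p : ℕ} (h : HasWalk A u v p) (ha : A v w) :
    HasWalk A u w (p + 1) := by
  obtain ⟨f, hf0, hfl, hfa⟩ := h
  refine ⟨fun i => if i ≤ p then f i else w, by simp [hf0], by simp, ?_⟩
  intro i hi
  rcases Nat.lt_or_ge i p with hip | hip
  · have h1 : i ≤ p := by omega
    have h2 : i + 1 ≤ p := by omega
    simp only [if_pos h1, if_pos h2]
    exact hfa i hip
  · have hi' : i = p := by omega
    subst hi'
    have h2 : ¬ (i + 1 ≤ i) := by omega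
    simp only [le_refl, if_pos, if_neg h2, hfl]
    exact ha

lemma hasWalk_comp {u v w : Fin n} {p q : ℕ} (h1 : HasWalk A u v p) (h2 : HasWalk A v w q) :
    HasWalk A u w (p + q) := by
  induction q generalizing w with
  | zero =>
    obtain ⟨g, hg0, hgl, _⟩ := h2
    have : v = w := by rw [← hg0, hgl]
    exact this ▸ h1
  | succ q ih =>
    obtain ⟨z, hz1, hz2⟩ := hasWalk_split (p := q) (q := 1) h2
    obtain ⟨g, hg0, hgl, hga⟩ := hz2
    have harc : A z w := by
      have := hga 0 (by omega)
      rwa [hg0, hgl] at this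
    exact hasWalk_succ (ih hz1) harc

lemma hasWalk_rev {u v : Fin n} {p : ℕ} (h : HasWalk A u v p) :
    HasWalk (fun a b => A b a) v u p := by
  obtain ⟨f, hf0, hfl, hfa⟩ := h
  refine ⟨fun i => f (p - i), by simp [hfl], by simp [hf0], ?_⟩
  intro i hi
  show A (f (p - (i + 1))) (f (p - i))
  have h1 : p - i = (p - (i + 1)) + 1 := by omega
  rw [h1]
  exact hfa _ (by omega)

lemma primitive_rev (hp : Primitive A) : Primitive (fun a b => A b a) := by
  obtain ⟨p, hp0, hw⟩ := hp
  exact ⟨p, hp0, fun u v => hasWalk_rev (hw v u)⟩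

lemma primitive_allWalk (hp : Primitive A) :
    ∃ p, 0 < p ∧ ∀ t, p ≤ t → ∀ u v : Fin n, HasWalk A u v t := by
  obtain ⟨p, hp0, hw⟩ := hp
  refine ⟨p, hp0, ?_⟩
  intro t ht
  induction t, ht using Nat.le_induction with
  | base => exact hw
  | succ t ht ih =>
    intro u v
    have hvv : HasWalk A v v ((p - 1) + 1) := by
      have : p - 1 + 1 = p := by omega
      rw [this]; exact hw v v
    obtain ⟨z, _, hz2⟩ := hasWalk_split hvv
    obtain ⟨g, hg0, hgl, hga⟩ := hz2
    have harc : A z v := by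
      have := hga 0 (by omega)
      rwa [hg0, hgl] at this
    exact hasWalk_succ (ih u z) harc

lemma walk_extend (hp : Primitive A) (u : Fin n) (b : ℕ) : ∃ z, HasWalk A u z b := by
  obtain ⟨p, hp0, hw⟩ := hp
  induction b with
  | zero => exact ⟨u, hasWalk_refl u⟩
  | succ b ih =>
    obtain ⟨z, hz⟩ := ih
    have hzz : HasWalk A z z (1 + (p - 1)) := by
      have : 1 + (p - 1) = p := by omega
      rw [this]; exact hw z z
    obtain ⟨z', hz1, _⟩ := hasWalk_split hzz
    exact ⟨z', hasWalk_comp hz hz1⟩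

end WalkAux

section RsetAux

variable {n : ℕ}

/-- The set of vertices reachable from `v` by a walk of length exactly `p`. -/
noncomputable def Rset (A : Fin n → Fin n → Prop) (v : Fin n) (p : ℕ) : Finset (Fin n) :=
  Finset.univ.filter fun w => HasWalk A v w p

variable {A : Fin n → Fin n → Prop}

lemma mem_Rset {v w : Fin n} {p : ℕ} : w ∈ Rset A v p ↔ HasWalk A v w p := by
  simp [Rset]

lemma mem_Rset_add {v w : Fin n} {t r : ℕ} :
    w ∈ Rset A v (t + r) ↔ ∃ z, z ∈ Rset A v t ∧ HasWalk A z w r := by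
  constructor
  · intro h
    obtain ⟨z, hz1, hz2⟩ := hasWalk_split (mem_Rset.1 h)
    exact ⟨z, mem_Rset.2 hz1, hz2⟩
  · rintro ⟨z, hz1, hz2⟩
    exact mem_Rset.2 (hasWalk_comp (mem_Rset.1 hz1) hz2)

lemma Rset_congr_add {v : Fin n} {t t' : ℕ} (h : Rset A v t = Rset A v t') (r : ℕ) :
    Rset A v (t + r) = Rset A v (t' + r) := by
  ext w
  rw [mem_Rset_add, mem_Rset_add, h]

/-- Strict growth of reachable sets along a closed walk of length `s`. -/
lemma Rset_growth (hp : Primitive A) {u : Fin n} {s : ℕ} (hs : 0 < s)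
    (hu : HasWalk A u u s) : ∀ j b, min n (j + 1) ≤ (Rset A u (b + j * s)).card := by
  obtain ⟨p, hp0, hall⟩ := primitive_allWalk hp
  have hn : 0 < n := u.pos
  intro j
  induction j with
  | zero =>
    intro b
    obtain ⟨z, hz⟩ := walk_extend hp u b
    have hmem : z ∈ Rset A u (b + 0 * s) := mem_Rset.2 (by simpa using hz)
    have hcard : 1 ≤ (Rset A u (b + 0 * s)).card := Finset.card_pos.2 ⟨z, hmem⟩
    omega
  | succ j ihj =>
    intro b
    have hsub : Rset A u (b + j * s) ⊆ Rset A u (b + (j + 1) * s) := by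
      intro w hw'
      rw [mem_Rset] at *
      have hcw := hasWalk_comp hu (mem_Rset.1 (mem_Rset.2 hw'))
      have he : s + (b + j * s) = b + (j + 1) * s := by ring
      exact he ▸ hcw
    by_cases hU : Rset A u (b + j * s) = Finset.univ
    · have hU' : Rset A u (b + (j + 1) * s) = Finset.univ :=
        Finset.univ_subset_iff.1 (hU ▸ hsub)
      rw [hU', Finset.card_univ, Fintype.card_fin]
      omega
    · have hne : Rset A u (b + j * s) ≠ Rset A u (b + (j + 1) * s) := by
        intro heq
        apply hU
        have key : ∀ i, Rset A u (b + j * s + i * s) = Rset A u (b + j * s) := by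
          intro i
          induction i with
          | zero => simp
          | succ i ih =>
            have e1 : b + j * s + (i + 1) * s = (b + j * s + i * s) + s := by ring
            have e2 : b + (j + 1) * s = (b + j * s) + s := by ring
            rw [e1, Rset_congr_add ih s, ← e2, ← heq]
        have hps : p ≤ b + j * s + p * s := by
          have : p ≤ p * s := Nat.le_mul_of_pos_right p hs
          omega
        rw [← key p]
        apply Finset.eq_univ_of_forall
        intro w
        exact mem_Rset.2 (hall _ hps u w)
      have hss : Rset A u (b + j * s) ⊂ Rset A u (b + (j + 1) * s) :=
        ⟨hsub, fun h => hne (Finset.Subset.antisymm hsub h)⟩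
      have hcard := Finset.card_lt_card hss
      have hIH := ihj b
      have hle : (Rset A u (b + (j + 1) * s)).card ≤ n := by
        have := Finset.card_le_univ (Rset A u (b + (j + 1) * s))
        simpa using this
      omega

end RsetAux

section CycleAux

variable {n : ℕ} {A : Fin n → Fin n → Prop}

/-- Every closed walk either yields a cycle of length at most `n - 1`, or has
length divisible by `n`. -/
lemma short_cycle_or_dvd :
    ∀ ℓ, 0 < ℓ → ∀ f : ℕ → Fin n, f ℓ = f 0 → (∀ i < ℓ, A (f i) (f (i + 1))) →
      (∃ g s, 0 < s ∧ s ≤ n - 1 ∧ IsCycleSeq A g s) ∨ n ∣ ℓ := by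
  intro ℓ
  induction ℓ using Nat.strong_induction_on with
  | _ ℓ IH =>
    intro hℓ f hcl ha
    by_cases hinj : ∀ i < ℓ, ∀ j < ℓ, f i = f j → i = j
    · have hle : ℓ ≤ n := by
        have hfi : Function.Injective (fun i : Fin ℓ => f i) := by
          intro a b hab
          exact Fin.ext (hinj a a.isLt b b.isLt hab)
        simpa using Fintype.card_le_of_injective _ hfi
      rcases eq_or_lt_of_le hle with heq | hlt
      · exact Or.inr (heq ▸ dvd_refl ℓ)
      · exact Or.inl ⟨f, ℓ, hℓ, by omega, hℓ, hcl, ha, hinj⟩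
    · push_neg at hinj
      obtain ⟨i, hi, j, hj, hfij, hij⟩ := hinj
      have key : ∀ a b : ℕ, a < b → b < ℓ → f a = f b →
          (∃ g s, 0 < s ∧ s ≤ n - 1 ∧ IsCycleSeq A g s) ∨ n ∣ ℓ := by
        intro a b hab hbl hfab
        -- first closed walk: around the repeated vertex, length b - a
        have hw1 : (∃ g s, 0 < s ∧ s ≤ n - 1 ∧ IsCycleSeq A g s) ∨ n ∣ (b - a) := by
          apply IH (b - a) (by omega) (by omega) (fun t => f (a + t))
          · show f (a + (b - a)) = f (a + 0)
            have : a + (b - a) = b := by omega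
            rw [this]; simpa using hfab.symm
          · intro t ht
            have : A (f (a + t)) (f (a + t + 1)) := ha (a + t) (by omega)
            simpa [Nat.add_assoc] using this
        -- second closed walk: splice out the loop, length ℓ - (b - a)
        have hw2 : (∃ g s, 0 < s ∧ s ≤ n - 1 ∧ IsCycleSeq A g s) ∨ n ∣ (ℓ - (b - a)) := by
          apply IH (ℓ - (b - a)) (by omega) (by omega)
            (fun t => if t ≤ a then f t else f (t + (b - a)))
          · have h1 : ¬ (ℓ - (b - a) ≤ a) := by omega
            have h2 : ℓ - (b - a) + (b - a) = ℓ := by omega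
            simp [if_neg h1, h2, hcl]
            intro h3
            omega
          · intro t ht
            rcases Nat.lt_or_ge t a with h1 | h1
            · have e1 : t ≤ a := by omega
              have e2 : t + 1 ≤ a := by omega
              simp only [if_pos e1, if_pos e2]
              exact ha t (by omega)
            · rcases Nat.eq_or_lt_of_le h1 with h2 | h2
              · have e2 : ¬ (a + 1 ≤ a) := by omega
                have e4 : a ≤ a := le_refl a
                rw [← h2]
                simp only [if_pos e4, if_neg e2]
                have e3 : a + 1 + (b - a) = b + 1 := by omega
                rw [e3, hfab]
                exact ha b hbl
              · have e1 : ¬ (t ≤ a) := by omega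
                have e2 : ¬ (t + 1 ≤ a) := by omega
                simp only [if_neg e1, if_neg e2]
                have e3 : t + 1 + (b - a) = t + (b - a) + 1 := by omega
                rw [e3]
                exact ha (t + (b - a)) (by omega)
        rcases hw1 with hc | hd1
        · exact Or.inl hc
        rcases hw2 with hc | hd2
        · exact Or.inl hc
        · right
          have : (b - a) + (ℓ - (b - a)) = ℓ := by omega
          exact this ▸ Nat.dvd_add hd1 hd2
      rcases Nat.lt_or_ge i j with hlt | hge
      · exact key i j hlt hj hfij
      · exact key j i (by omega) hi hfij.symm

/-- A primitive digraph on at least two vertices has a cycle of length at most `n-1`. -/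
lemma exists_short_cycle (hp : Primitive A) (hn : 2 ≤ n) :
    ∃ g s, 0 < s ∧ s ≤ n - 1 ∧ IsCycleSeq A g s := by
  obtain ⟨p, hp0, hw⟩ := hp
  set u : Fin n := ⟨0, by omega⟩
  -- closed walk of length p
  obtain ⟨f, hf0, hfl, hfa⟩ := hw u u
  have h1 := short_cycle_or_dvd (A := A) p hp0 f (by rw [hfl, hf0]) hfa
  rcases h1 with hc | hd1
  · exact hc
  -- closed walk of length p + 1
  have huu : HasWalk A u u (1 + (p - 1)) := by
    have : 1 + (p - 1) = p := by omega
    rw [this]; exact hw u u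
  obtain ⟨z, hz1, _⟩ := hasWalk_split huu
  have h2 : HasWalk A u u (1 + p) := hasWalk_comp hz1 (hw z u)
  obtain ⟨g, hg0, hgl, hga⟩ := h2
  have h3 := short_cycle_or_dvd (A := A) (1 + p) (by omega) g (by rw [hgl, hg0]) hga
  rcases h3 with hc | hd2
  · exact hc
  · exfalso
    have : n ∣ 1 := by
      have := Nat.dvd_sub hd2 hd1
      simpa using this
    have := Nat.le_of_dvd (by omega) this
    omega

/-- Each vertex of a cycle has a closed walk of the cycle's length. -/
lemma cycle_closed_walk {g : ℕ → Fin n} {s : ℕ} (hc : IsCycleSeq A g s)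
    {i : ℕ} (hi : i < s) : HasWalk A (g i) (g i) s := by
  obtain ⟨hs0, hcl, harc, _⟩ := hc
  refine ⟨fun t => g ((i + t) % s), by simp [Nat.mod_eq_of_lt hi], ?_, ?_⟩
  · show g ((i + s) % s) = g i
    have : (i + s) % s = i % s := by simp [Nat.add_mod_right]
    rw [this, Nat.mod_eq_of_lt hi]
  · intro t ht
    set a := (i + t) % s with hadef
    have hA : a < s := by rw [hadef]; exact Nat.mod_lt _ hs0
    have hstep : (i + t + 1) % s = (a + 1) % s := by
      conv_lhs => rw [← Nat.div_add_mod (i + t) s, ← hadef]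
      rw [Nat.add_assoc, Nat.mul_add_mod]
    show A (g a) (g ((i + t + 1) % s))
    rw [hstep]
    rcases Nat.lt_or_ge (a + 1) s with h1 | h1
    · rw [Nat.mod_eq_of_lt h1]
      exact harc a hA
    · have h2 : a + 1 = s := by omega
      have h3 : (a + 1) % s = 0 := by rw [h2, Nat.mod_self]
      rw [h3, ← hcl, ← h2]
      exact harc a hA

end CycleAux

section MainAux

variable {n : ℕ} {A : Fin n → Fin n → Prop}

/-- Every vertex is within distance `n - s` of a cycle of length `s`. -/
lemma dist_to_cycle (hp : Primitive A) {g : ℕ → Fin n} {s : ℕ}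
    (hc : IsCycleSeq A g s) (v : Fin n) :
    ∃ d, d ≤ n - s ∧ ∃ i, i < s ∧ HasWalk A v (g i) d := by
  obtain ⟨s_pos, hgcl, hgarc, hginj⟩ := hc
  obtain ⟨p, hp0, hw⟩ := hp
  have hex : ∃ ℓ, ∃ i, i < s ∧ HasWalk A v (g i) ℓ := ⟨p, 0, s_pos, hw v (g 0)⟩
  set d := Nat.find hex with hd
  obtain ⟨i₀, hi₀, f, hf0, hfd, hfa⟩ : ∃ i, i < s ∧ HasWalk A v (g i) d := Nat.find_spec hex
  refine ⟨d, ?_, i₀, hi₀, ⟨f, hf0, hfd, hfa⟩⟩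
  have hmin : ∀ ℓ, ℓ < d → ¬ ∃ i, i < s ∧ HasWalk A v (g i) ℓ := fun ℓ h => Nat.find_min hex h
  -- interior vertices of the walk avoid the cycle
  have hb : ∀ t, t < d → ∀ i, i < s → f t ≠ g i := by
    intro t ht i hi heq
    exact hmin t ht ⟨i, hi, ⟨f, hf0, heq, fun a ha => hfa a (by omega)⟩⟩
  -- interior vertices of the walk are pairwise distinct
  have hinj : ∀ a, a < d → ∀ b, b < d → f a = f b → a = b := by
    intro a hA0 b hB heq
    by_contra hne
    wlog hab : a < b generalizing a b
    · exact this b hB a hA0 heq.symm (Ne.symm hne) (by omega)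
    apply hmin (d - (b - a)) (by omega)
    refine ⟨i₀, hi₀, ⟨fun t => if t ≤ a then f t else f (t + (b - a)), by simp [hf0], ?_, ?_⟩⟩
    · have h1 : ¬ (d - (b - a) ≤ a) := by omega
      have h2 : d - (b - a) + (b - a) = d := by omega
      simp [if_neg h1, h2, hfd]
      intro h3
      omega
    · intro t ht
      rcases Nat.lt_or_ge t a with h1 | h1
      · have e1 : t ≤ a := by omega
        have e2 : t + 1 ≤ a := by omega
        simp only [if_pos e1, if_pos e2]
        exact hfa t (by omega)
      · rcases Nat.eq_or_lt_of_le h1 with h2 | h2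
        · have e2 : ¬ (a + 1 ≤ a) := by omega
          have e4 : a ≤ a := le_refl a
          rw [← h2]
          simp only [if_pos e4, if_neg e2]
          have e3 : a + 1 + (b - a) = b + 1 := by omega
          rw [e3, heq]
          exact hfa b (by omega)
        · have e1 : ¬ (t ≤ a) := by omega
          have e2 : ¬ (t + 1 ≤ a) := by omega
          simp only [if_neg e1, if_neg e2]
          have e3 : t + 1 + (b - a) = t + (b - a) + 1 := by omega
          rw [e3]
          exact hfa (t + (b - a)) (by omega)
  -- counting: d interior vertices plus s cycle vertices are distinct
  by_contra hdn
  have hsn : s ≤ n := by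
    have hgi : Function.Injective (fun i : Fin s => g i) := by
      intro a b hab
      exact Fin.ext (hginj a a.isLt b b.isLt hab)
    simpa using Fintype.card_le_of_injective _ hgi
  have hinj2 : Function.Injective
      (Sum.elim (fun t : Fin d => f t) (fun i : Fin s => g i)) := by
    rintro (a | a) (b | b) h <;> simp only [Sum.elim_inl, Sum.elim_inr] at h
    · exact congrArg Sum.inl (Fin.ext (hinj a a.isLt b b.isLt h))
    · exact absurd h (hb a a.isLt b b.isLt)
    · exact absurd h.symm (hb b b.isLt a a.isLt)
    · exact congrArg Sum.inr (Fin.ext (hginj a a.isLt b b.isLt h))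
  have hcard := Fintype.card_le_of_injective _ hinj2
  simp at hcard
  omega

/-- Key claim: from any vertex, walks of length `p ≥ m(n-1)+1` reach at least
`min n (m+1)` vertices. -/
lemma claimA (hp : Primitive A) {g : ℕ → Fin n} {s : ℕ} (hc : IsCycleSeq A g s)
    (hs : s ≤ n - 1) (hn : 2 ≤ n) (v : Fin n) (m : ℕ) (hm : 1 ≤ m) (p : ℕ)
    (hpm : m * (n - 1) + 1 ≤ p) : min n (m + 1) ≤ (Rset A v p).card := by
  obtain ⟨d, hd, i, his, hwalk⟩ := dist_to_cycle hp hc v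
  have hs0 : 0 < s := hc.1
  have hclosed : HasWalk A (g i) (g i) s := cycle_closed_walk hc his
  -- arithmetic: d + m * s ≤ p
  have hdp : d + m * s ≤ p := by
    have e1 : m * s = (m - 1) * s + s := by
      have hm1 : m = (m - 1) + 1 := by omega
      calc m * s = ((m - 1) + 1) * s := by rw [← hm1]
        _ = (m - 1) * s + s := by ring
    have e2 : m * (n - 1) = (m - 1) * (n - 1) + (n - 1) := by
      have hm1 : m = (m - 1) + 1 := by omega
      calc m * (n - 1) = ((m - 1) + 1) * (n - 1) := by rw [← hm1]
        _ = (m - 1) * (n - 1) + (n - 1) := by ring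
    have e3 : (m - 1) * s ≤ (m - 1) * (n - 1) := Nat.mul_le_mul_left _ hs
    have e4 : d + m * s ≤ (n - s) + ((m - 1) * s + s) := by
      rw [← e1]; omega
    have e5 : (n - s) + ((m - 1) * s + s) = n + (m - 1) * s := by omega
    have e6 : n + (m - 1) * s ≤ n + (m - 1) * (n - 1) := by omega
    have e7 : n + (m - 1) * (n - 1) = m * (n - 1) + 1 := by
      rw [e2]; omega
    omega
  have hdp' : d ≤ p := le_trans (Nat.le_add_right d _) hdp
  set q := p - d with hq
  have hms : m * s ≤ q := by
    omega
  have hqs : m ≤ q / s := (Nat.le_div_iff_mul_le hs0).2 hms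
  have hgrow := Rset_growth hp hs0 hclosed (q / s) (q % s)
  have hqe : q % s + q / s * s = q := Nat.mod_add_div' q s
  rw [hqe] at hgrow
  have hsub : Rset A (g i) q ⊆ Rset A v p := by
    intro w hw'
    rw [mem_Rset] at *
    have hcw := hasWalk_comp hwalk (mem_Rset.1 (mem_Rset.2 hw'))
    have he : d + q = p := by omega
    exact he ▸ hcw
  have hcard := Finset.card_le_card hsub
  have hmin : min n (m + 1) ≤ min n (q / s + 1) := by
    apply min_le_min (le_refl n)
    omega
  exact le_trans hmin (le_trans hgrow hcard)

end MainAux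

/-- Lemma 2.2: `F(D,k) ≤ (n-k)(n-1) + 1` for a primitive digraph of order `n`. -/
theorem upperMultiexp_le {n : ℕ} (D : Fin n → Fin n → Prop) (hprim : Primitive D)
    (k : ℕ) (hk1 : 1 ≤ k) (hkn : k ≤ n) :
    upperMultiexp D k ≤ (n - k) * (n - 1) + 1 := by
  classical
  have hn1 : 1 ≤ n := le_trans hk1 hkn
  have hp' : Primitive (fun u v : Fin n => D v u) := primitive_rev hprim
  set p₀ := (n - k) * (n - 1) + 1 with hp₀
  have key : ∀ v : Fin n, n - k + 1 ≤ (Rset (fun u v : Fin n => D v u) v p₀).card := by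
    intro v
    rcases Nat.eq_zero_or_pos (n - k) with hm | hm
    · rw [hm]
      obtain ⟨z, hz⟩ := walk_extend hp' v p₀
      simpa using Finset.card_pos.2 ⟨z, mem_Rset.2 hz⟩
    · have hn2 : 2 ≤ n := by omega
      obtain ⟨g, s, hs0, hsn, hc⟩ := exists_short_cycle hp' hn2
      have hA := claimA hp' hc hsn hn2 v (n - k) hm p₀ (le_refl _)
      rwa [min_eq_right (by omega : n - k + 1 ≤ n)] at hA
  have hX : ∀ X : Finset (Fin n), X.card = k → setExp D X ≤ p₀ := by
    intro X hXc
    unfold setExp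
    apply Nat.sInf_le
    show ∀ v, ∃ x ∈ X, HasWalk D x v p₀
    intro v
    have hcard := key v
    have hnonempty : (Rset (fun u v : Fin n => D v u) v p₀ ∩ X).Nonempty := by
      by_contra h
      rw [Finset.not_nonempty_iff_eq_empty] at h
      have hdisj : Disjoint (Rset (fun u v : Fin n => D v u) v p₀) X :=
        Finset.disjoint_iff_inter_eq_empty.2 h
      have hun := Finset.card_union_of_disjoint hdisj
      have hle := Finset.card_le_univ (Rset (fun u v : Fin n => D v u) v p₀ ∪ X)
      rw [Fintype.card_fin] at hle
      omega
    obtain ⟨x, hx⟩ := hnonempty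
    rw [Finset.mem_inter] at hx
    refine ⟨x, hx.2, ?_⟩
    exact hasWalk_rev (mem_Rset.1 hx.1)
  unfold upperMultiexp
  apply csSup_le'
  rintro e ⟨X, hXc, hXe⟩
  exact hXe ▸ hX X hXc
end

section
/- Let D be a primitive digraph of order n, let s be the length of a shortest cycle of D, and let 1 ≤ k ≤ n. Then F(D,k) ≤ (n-k-1)s + n. -/
namespace WalkAux
variable {n : ℕ} {A : Fin n → Fin n → Prop}

lemma refl (A : Fin n → Fin n → Prop) (u : Fin n) : HasWalk A u u 0 :=
  ⟨fun _ => u, rfl, rfl, fun i hi => absurd hi (Nat.not_lt_zero i)⟩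

lemma append {u w v : Fin n} {a b : ℕ}
    (h1 : HasWalk A u w a) (h2 : HasWalk A w v b) : HasWalk A u v (a + b) := by
  obtain ⟨f, hf0, hfa, hf⟩ := h1
  obtain ⟨g, hg0, hgb, hg⟩ := h2
  refine ⟨fun i => if i < a then f i else g (i - a), ?_, ?_, ?_⟩
  · by_cases h : 0 < a
    · simpa [h] using hf0
    · have ha : a = 0 := by omega
      simp only [ha]
      simpa using hg0.trans (by rw [← hf0, ← hfa, ha])
  · have : ¬ (a + b < a) := by omega
    simp only [this, if_false, Nat.add_sub_cancel_left]
    exact hgb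
  · intro i hi
    by_cases h1' : i + 1 < a
    · have hia : i < a := by omega
      simpa [hia, h1'] using hf i hia
    · by_cases h2' : i < a
      · have hia1 : i + 1 = a := by omega
        have hga : g (i + 1 - a) = f (i + 1) := by
          rw [hia1, Nat.sub_self, hg0, ← hfa]
        simp only [h2', if_true, h1', if_false, hga]
        exact hf i h2'
      · have h3 : ¬ (i + 1 < a) := h1'
        simp only [h2', if_false, h3, if_false]
        have : i + 1 - a = (i - a) + 1 := by omega
        rw [this]
        exact hg (i - a) (by omega)

lemma closed_pow {u : Fin n} {a : ℕ} (h : HasWalk A u u a) :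
    ∀ m, HasWalk A u u (m * a) := by
  intro m
  induction m with
  | zero => simpa using refl A u
  | succ m ih => simpa [Nat.succ_mul] using append ih h

end WalkAux

namespace WalkAux
variable {n : ℕ} {A : Fin n → Fin n → Prop}

section cyclic
variable {f : ℕ → Fin n} {s : ℕ}

lemma cyclic_arc (hs : 0 < s) (hcl : f s = f 0) (harc : ∀ i < s, A (f i) (f (i + 1))) :
    ∀ m, A (f (m % s)) (f ((m + 1) % s)) := by
  intro m
  have hrs : m % s < s := Nat.mod_lt _ hs
  rw [← Nat.mod_add_mod]
  by_cases h : m % s + 1 < s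
  · rw [Nat.mod_eq_of_lt h]
    exact harc _ hrs
  · have he : m % s + 1 = s := by omega
    rw [he, Nat.mod_self, ← hcl]
    have h2 := harc _ hrs
    rw [he] at h2
    exact h2

lemma cyclic_walk (hs : 0 < s) (hcl : f s = f 0) (harc : ∀ i < s, A (f i) (f (i + 1))) :
    ∀ a e, HasWalk A (f (a % s)) (f ((a + e) % s)) e := by
  intro a e
  exact ⟨fun t => f ((a + t) % s), rfl, rfl, fun i _ => cyclic_arc hs hcl harc (a + i)⟩

end cyclic

/-- a walk in the power digraph gives a walk of multiplied length -/
lemma of_pow {s : ℕ} {u v : Fin n} {m : ℕ}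
    (h : HasWalk (fun x y => HasWalk A x y s) u v m) : HasWalk A u v (m * s) := by
  induction m generalizing v with
  | zero =>
    obtain ⟨g, h0, hm, _⟩ := h
    have huv : u = v := h0.symm.trans hm
    simpa [huv] using refl A v
  | succ m ih =>
    obtain ⟨g, h0, hm, hstep⟩ := h
    have h1 : HasWalk (fun x y => HasWalk A x y s) u (g m) m :=
      ⟨g, h0, rfl, fun i hi => hstep i (by omega)⟩
    have h2 : HasWalk A (g m) v s := by
      have := hstep m (by omega)
      rwa [hm] at this
    simpa [Nat.succ_mul] using append (ih h1) h2

/-- a walk of length m*s gives a walk of length m in the power digraph -/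
lemma to_pow {s : ℕ} {u v : Fin n} {m : ℕ}
    (h : HasWalk A u v (m * s)) : HasWalk (fun x y => HasWalk A x y s) u v m := by
  obtain ⟨g, h0, hm, hstep⟩ := h
  refine ⟨fun j => g (j * s), by simp only [Nat.zero_mul]; exact h0, hm, ?_⟩
  intro j hj
  refine ⟨fun t => g (j * s + t), rfl, ?_, ?_⟩
  · show g (j * s + s) = g ((j + 1) * s)
    rw [Nat.succ_mul]
  · intro i hi
    exact hstep (j * s + i) (by
      have : j * s + i < (j + 1) * s := by rw [Nat.succ_mul]; omega
      have h2 : (j + 1) * s ≤ m * s := Nat.mul_le_mul_right s hj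
      omega)

end WalkAux

namespace WalkAux

lemma single_step {n : ℕ} {A : Fin n → Fin n → Prop} {u v : Fin n} (h : A u v) :
    HasWalk A u v 1 := by
  refine ⟨fun t => if t = 0 then u else v, by simp, by simp, ?_⟩
  intro i hi
  have : i = 0 := by omega
  simpa [this] using h

lemma reach_within {n : ℕ} (B : Fin n → Fin n → Prop) (X : Finset (Fin n)) {k p : ℕ}
    (hk : X.card = k) (hk1 : 1 ≤ k) (hkn : k ≤ n)
    (hconn : ∀ u v : Fin n, HasWalk B u v p) :
    ∀ z : Fin n, ∃ x ∈ X, ∃ m ≤ n - k, HasWalk B x z m := by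
  classical
  obtain ⟨x₀, hx₀⟩ : X.Nonempty := Finset.card_pos.mp (by omega)
  intro z
  set reach : ℕ → Finset (Fin n) :=
    fun j => Finset.univ.filter (fun y => ∃ x ∈ X, ∃ m ≤ j, HasWalk B x y m) with hreach
  have hmem : ∀ j y, y ∈ reach j ↔ ∃ x ∈ X, ∃ m ≤ j, HasWalk B x y m := by
    intro j y; simp [hreach]
  have hmono : ∀ a b, a ≤ b → reach a ⊆ reach b := by
    intro a b hab y hy
    rw [hmem] at hy ⊢
    obtain ⟨x, hx, m, hm, hw⟩ := hy
    exact ⟨x, hx, m, by omega, hw⟩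
  have hX0 : ∀ j, ∀ x ∈ X, x ∈ reach j := by
    intro j x hx
    rw [hmem]
    exact ⟨x, hx, 0, Nat.zero_le _, refl B x⟩
  suffices h : reach (n - k) = Finset.univ by
    have hz : z ∈ reach (n - k) := h ▸ Finset.mem_univ z
    rw [hmem] at hz
    exact hz
  have key : ∀ j, reach j = Finset.univ ∨ k + j ≤ (reach j).card := by
    intro j
    induction j with
    | zero =>
      right
      have : X ⊆ reach 0 := fun x hx => hX0 0 x hx
      simpa [hk] using Finset.card_le_card this
    | succ j ih =>
      rcases ih with h | h
      · left
        have := hmono j (j + 1) (by omega)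
        rw [h] at this
        exact Finset.univ_subset_iff.mp this
      · by_cases hfull : reach j = Finset.univ
        · left
          have := hmono j (j + 1) (by omega)
          rw [hfull] at this
          exact Finset.univ_subset_iff.mp this
        · right
          by_contra hc
          push_neg at hc
          have heq : reach j = reach (j + 1) :=
            Finset.eq_of_subset_of_card_le (hmono j (j + 1) (by omega)) (by omega)
          have hclosed : ∀ y w, y ∈ reach j → B y w → w ∈ reach j := by
            intro y w hy hB
            rw [heq, hmem]
            rw [hmem] at hy
            obtain ⟨x, hx, m, hm, hwalk⟩ := hy
            exact ⟨x, hx, m + 1, by omega, append hwalk (single_step hB)⟩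
          apply hfull
          apply Finset.eq_univ_of_forall
          intro y
          obtain ⟨g, hg0, hgp, hgstep⟩ := hconn x₀ y
          have hall : ∀ i, i ≤ p → g i ∈ reach j := by
            intro i
            induction i with
            | zero => intro _; rw [hg0]; exact hX0 j x₀ hx₀
            | succ i ihh =>
              intro hip
              exact hclosed _ _ (ihh (by omega)) (hgstep i (by omega))
          have := hall p le_rfl
          rwa [hgp] at this
  rcases key (n - k) with h | h
  · exact h
  · have hle : (reach (n - k)).card ≤ n := by
      simpa using Finset.card_le_univ (reach (n - k))
    have hcard : (reach (n - k)).card = n := by omega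
    exact Finset.eq_univ_of_card _ (by rw [hcard, Fintype.card_fin])

end WalkAux

namespace WalkAux

lemma short_walk_from_set {n : ℕ} (A : Fin n → Fin n → Prop) (W : Finset (Fin n)) (v : Fin n)
    (hne : ∃ l, ∃ w ∈ W, HasWalk A w v l) :
    ∃ w ∈ W, ∃ d ≤ n - W.card, HasWalk A w v d := by
  classical
  set T : Set ℕ := {l | ∃ w ∈ W, HasWalk A w v l} with hT
  have hTne : T.Nonempty := by
    obtain ⟨l, w, hw, hwalk⟩ := hne
    exact ⟨l, w, hw, hwalk⟩
  set d := sInf T with hd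
  have hdT : d ∈ T := Nat.sInf_mem hTne
  have hmin : ∀ l, l < d → l ∉ T := fun l hl => Nat.notMem_of_lt_sInf hl
  obtain ⟨w, hw, g, hg0, hgd, hstep⟩ := hdT
  refine ⟨w, hw, d, ?_, ⟨g, hg0, hgd, hstep⟩⟩
  -- interior vertices avoid W
  have hnotW : ∀ i, 1 ≤ i → i ≤ d → g i ∉ W := by
    intro i h1 h2 hiW
    have hwalk : HasWalk A (g i) v (d - i) := by
      refine ⟨fun t => g (i + t), rfl, ?_, ?_⟩
      · show g (i + (d - i)) = v
        rw [Nat.add_sub_cancel' h2]; exact hgd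
      · intro t ht
        exact hstep (i + t) (by omega)
    exact hmin (d - i) (by omega) ⟨g i, hiW, hwalk⟩
  -- interior vertices pairwise distinct
  have hinj : ∀ i j, 1 ≤ i → i < j → j ≤ d → g i ≠ g j := by
    intro i j h1 hij hjd hgij
    have hwalk : HasWalk A w v (d - (j - i)) := by
      refine ⟨fun t => if t ≤ i then g t else g (t + (j - i)), by simp [hg0], ?_, ?_⟩
      · show (if d - (j - i) ≤ i then g (d - (j - i)) else g (d - (j - i) + (j - i))) = v
        by_cases hcase : d - (j - i) ≤ i
        · have h1' : d = j := by omega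
          have h2' : d - (j - i) = i := by omega
          rw [if_pos hcase, h2', hgij, ← h1']; exact hgd
        · rw [if_neg hcase, Nat.sub_add_cancel (by omega)]; exact hgd
      · intro t ht
        by_cases hc1 : t + 1 ≤ i
        · simp only [show t ≤ i by omega, if_pos, hc1, if_true]
          exact hstep t (by omega)
        · by_cases hc2 : t ≤ i
          · have hti : t = i := by omega
            simp only [hc2, if_true, hc1, if_false]
            rw [hti, hgij, show i + 1 + (j - i) = j + 1 by omega]
            exact hstep j (by omega)
          · simp only [hc2, if_false, hc1, if_false]
            rw [show t + 1 + (j - i) = t + (j - i) + 1 by omega]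
            exact hstep (t + (j - i)) (by omega)
    exact hmin (d - (j - i)) (by omega) ⟨w, hw, hwalk⟩
  -- counting
  have hsub : (Finset.Icc 1 d).image g ⊆ Finset.univ \ W := by
    intro y hy
    obtain ⟨i, hi, rfl⟩ := Finset.mem_image.mp hy
    rw [Finset.mem_Icc] at hi
    exact Finset.mem_sdiff.mpr ⟨Finset.mem_univ _, hnotW i hi.1 hi.2⟩
  have hinjOn : Set.InjOn g (Finset.Icc 1 d) := by
    intro i hi j hj hgij
    simp only [Finset.coe_Icc, Set.mem_Icc] at hi hj
    rcases lt_trichotomy i j with h | h | h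
    · exact absurd hgij (hinj i j hi.1 h hj.2)
    · exact h
    · exact absurd hgij.symm (hinj j i hj.1 h hi.2)
  have hcard1 : ((Finset.Icc 1 d).image g).card = d := by
    rw [Finset.card_image_of_injOn hinjOn, Nat.card_Icc]
    omega
  have hcard2 : (Finset.univ \ W).card = n - W.card := by
    rw [Finset.card_sdiff_of_subset (Finset.subset_univ W), Finset.card_univ, Fintype.card_fin]
  calc d = ((Finset.Icc 1 d).image g).card := hcard1.symm
    _ ≤ (Finset.univ \ W).card := Finset.card_le_card hsub
    _ = n - W.card := hcard2

end WalkAux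

/-- Lemma 2.3: `F(D,k) ≤ (n-k-1)s + n`, where `s` is the length of a shortest
cycle of the primitive digraph `D`. -/
theorem upperMultiexp_le_shortest_cycle {n : ℕ} (D : Fin n → Fin n → Prop)
    (hprim : Primitive D) (s : ℕ)
    (hs : IsLeast {p | ∃ f : ℕ → Fin n, IsCycleSeq D f p} s)
    (k : ℕ) (hk1 : 1 ≤ k) (hkn : k ≤ n) :
    (upperMultiexp D k : ℤ) ≤ ((n : ℤ) - k - 1) * s + n := by
  classical
  obtain ⟨p, hp0, hpw⟩ := hprim
  obtain ⟨f, hspos, hcl, harc, hdistinct⟩ := hs.1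
  set W : Finset (Fin n) := (Finset.range s).image f with hW
  have hWcard : W.card = s := by
    rw [hW, Finset.card_image_of_injOn, Finset.card_range]
    intro i hi j hj hij
    exact hdistinct i (by simpa using hi) j (by simpa using hj) hij
  have hsn : s ≤ n := by
    have := Finset.card_le_univ W
    rwa [hWcard, Fintype.card_fin] at this
  have hfW : ∀ i, f (i % s) ∈ W :=
    fun i => Finset.mem_image.mpr ⟨i % s, Finset.mem_range.mpr (Nat.mod_lt _ hspos), rfl⟩
  -- strong connectivity of the power digraph
  have hBconn : ∀ u z : Fin n, HasWalk (fun x y => HasWalk D x y s) u z p := by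
    intro u z
    apply WalkAux.to_pow
    have h1 : HasWalk D u u ((s - 1) * p) := WalkAux.closed_pow (hpw u u) (s - 1)
    have h2 := WalkAux.append h1 (hpw u z)
    have h3 : (s - 1) * p + p = p * s := by
      cases s with
      | zero => omega
      | succ t => simp [Nat.succ_sub_one, Nat.succ_mul, Nat.mul_succ]; ring
    rwa [h3] at h2
  -- s-loops at cycle vertices
  have hloop : ∀ i, HasWalk D (f (i % s)) (f (i % s)) s := by
    intro i
    have h := WalkAux.cyclic_walk (A := D) hspos hcl harc (i % s) s
    rwa [Nat.mod_mod_of_dvd i dvd_rfl, Nat.add_mod_right, Nat.mod_mod_of_dvd i dvd_rfl] at h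
  set P := (n - k) * s + (n - s) with hP
  have main : ∀ X : Finset (Fin n), X.card = k → ∀ v, ∃ x ∈ X, HasWalk D x v P := by
    intro X hX v
    have hne : ∃ l, ∃ w ∈ W, HasWalk D w v l := ⟨p, f (0 % s), hfW 0, hpw _ v⟩
    obtain ⟨wst, hwst, dd, hdd, hwalkd⟩ := WalkAux.short_walk_from_set D W v hne
    obtain ⟨r, hr, hfr⟩ := Finset.mem_image.mp hwst
    rw [Finset.mem_range] at hr
    rw [hWcard] at hdd
    set e := n - s - dd with he
    set a := r + e * (s - 1) with ha
    have hrot : HasWalk D (f (a % s)) wst e := by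
      have h := WalkAux.cyclic_walk (A := D) hspos hcl harc a e
      have hmod : (a + e) % s = r := by
        have hae : a + e = r + e * s := by
          have hs1 : s - 1 + 1 = s := by omega
          rw [ha]
          calc r + e * (s - 1) + e = r + e * ((s - 1) + 1) := by ring
            _ = r + e * s := by rw [hs1]
        rw [hae, Nat.add_mul_mod_self_right, Nat.mod_eq_of_lt hr]
      rw [hmod, hfr] at h
      exact h
    obtain ⟨x, hx, m, hm, hwB⟩ := WalkAux.reach_within
      (fun x y => HasWalk D x y s) X hX hk1 hkn hBconn (f (a % s))
    have hpad : ∀ t, HasWalk (fun x y => HasWalk D x y s) (f (a % s)) (f (a % s)) t := by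
      intro t
      induction t with
      | zero => exact WalkAux.refl _ _
      | succ t ih => exact WalkAux.append ih (WalkAux.single_step (hloop a))
    have hfull : HasWalk (fun x y => HasWalk D x y s) x (f (a % s)) (n - k) := by
      have h := WalkAux.append hwB (hpad (n - k - m))
      rwa [show m + (n - k - m) = n - k by omega] at h
    have hD1 : HasWalk D x (f (a % s)) ((n - k) * s) := WalkAux.of_pow hfull
    have hD2 := WalkAux.append hD1 (WalkAux.append hrot hwalkd)
    have hlen : (n - k) * s + (e + dd) = P := by
      rw [hP, he]; omega
    exact ⟨x, hx, by rwa [hlen] at hD2⟩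
  have hsetExp : ∀ X : Finset (Fin n), X.card = k → setExp D X ≤ P := by
    intro X hX
    exact Nat.sInf_le (main X hX)
  have hsup : upperMultiexp D k ≤ P := by
    apply csSup_le
    · obtain ⟨X, _, hXcard⟩ := Finset.exists_subset_card_eq
        (s := (Finset.univ : Finset (Fin n))) (n := k) (by rwa [Finset.card_univ, Fintype.card_fin])
      exact ⟨setExp D X, X, hXcard, rfl⟩
    · rintro en ⟨X, hXcard, rfl⟩
      exact hsetExp X hXcard
  have hcast : (P : ℤ) = ((n : ℤ) - k - 1) * s + n := by
    rw [hP]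
    push_cast [Nat.cast_sub hkn, Nat.cast_sub hsn]
    ring
  calc (upperMultiexp D k : ℤ) ≤ (P : ℤ) := by exact_mod_cast hsup
    _ = _ := hcast
end
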